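/- arXiv:2007.09275 — 5 statements merged into one kernel-verified Lean document; each statement's English description precedes it below -/
import Mathlib

section
/- Let a and b be positive real numbers. There is a constant C = C(a,b) such that for every positive integer n, every positive integer m, and every integer k, | Σ_{1 ≤ j ≤ n−1, j ≡ k (mod m)} j^a·(n−j)^b − (n^{a+b+1}/m)·Γ(a+1)Γ(b+1)/Γ(a+b+2) | ≤ C·n^{a+b}. -/
open Finset intervalIntegral


lemma beta_real (a b : ℝ) (ha : 0 < a) (hb : 0 < b) {N : ℝ} (hN : 0 < N) :
    ∫ x in (0:ℝ)..N, x ^ a * (N - x) ^ b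
      = N ^ (a + b + 1) * (Real.Gamma (a+1) * Real.Gamma (b+1) / Real.Gamma (a+b+2)) := by
  have key := Complex.betaIntegral_scaled (a+1) (b+1) hN
  have hG := Complex.Gamma_mul_Gamma_eq_betaIntegral
    (s := (a:ℂ)+1) (t := (b:ℂ)+1) (by simp; linarith) (by simp; linarith)
  have hGne : Complex.Gamma ((a:ℂ)+1+((b:ℂ)+1)) ≠ 0 := by
    have : ((a:ℂ)+1+((b:ℂ)+1)) = ((a+b+2 : ℝ) : ℂ) := by push_cast; ring
    rw [this, Complex.Gamma_ofReal]
    exact_mod_cast (Real.Gamma_pos_of_pos (by linarith)).ne'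
  have hbeta : Complex.betaIntegral ((a:ℂ)+1) ((b:ℂ)+1)
      = Complex.Gamma ((a:ℂ)+1) * Complex.Gamma ((b:ℂ)+1) / Complex.Gamma ((a:ℂ)+1+((b:ℂ)+1)) := by
    field_simp [hG]
    rw [hG]; ring
  -- express the complex interval integral as ofReal of the real one
  have hcong : (∫ x in (0:ℝ)..N, (x:ℂ) ^ ((a:ℂ)+1-1) * ((N:ℂ) - x) ^ ((b:ℂ)+1-1))
      = ((∫ x in (0:ℝ)..N, x ^ a * (N - x) ^ b : ℝ) : ℂ) := by
    rw [← intervalIntegral.integral_ofReal]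
    apply intervalIntegral.integral_congr
    intro x hx
    rw [Set.uIcc_of_le hN.le] at hx
    obtain ⟨hx0, hxN⟩ := hx
    have h1 : ((x ^ a : ℝ) : ℂ) = (x:ℂ) ^ ((a:ℂ)+1-1) := by
      rw [Complex.ofReal_cpow hx0]; ring_nf
    have h2 : (((N - x) ^ b : ℝ) : ℂ) = ((N:ℂ) - x) ^ ((b:ℂ)+1-1) := by
      rw [Complex.ofReal_cpow (by linarith)]; push_cast; ring_nf
    simp only [Complex.ofReal_mul, h1, h2]
  rw [hcong, hbeta] at key
  have hNc : ((N:ℂ)) ^ ((a:ℂ)+1+((b:ℂ)+1)-1) = ((N ^ (a+b+1) : ℝ) : ℂ) := by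
    rw [Complex.ofReal_cpow hN.le]
    norm_num; ring_nf
  rw [hNc] at key
  have : ((a:ℂ)+1+((b:ℂ)+1)) = ((a+b+2 : ℝ) : ℂ) := by push_cast; ring
  rw [this] at key
  have hcast : (Complex.Gamma ((a:ℂ)+1) * Complex.Gamma ((b:ℂ)+1) / Complex.Gamma (((a+b+2:ℝ)):ℂ))
      = ((Real.Gamma (a+1) * Real.Gamma (b+1) / Real.Gamma (a+b+2) : ℝ) : ℂ) := by
    have e1 : ((a:ℂ)+1) = ((a+1 : ℝ) : ℂ) := by push_cast; ring
    have e2 : ((b:ℂ)+1) = ((b+1 : ℝ) : ℂ) := by push_cast; ring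
    rw [e1, e2, Complex.Gamma_ofReal, Complex.Gamma_ofReal, Complex.Gamma_ofReal]
    push_cast; ring
  rw [hcast, ← Complex.ofReal_mul] at key
  exact_mod_cast key

lemma filter_mod_eq_image {n m r : ℕ} (hm : 0 < m) (hr : r < m) (hmn : m < n) :
    ((Finset.Ico 1 n).filter (fun j => j % m = r))
      = (Finset.range ((n - 1 - (if r = 0 then m else r)) / m + 1)).image
          (fun t => (if r = 0 then m else r) + t * m) := by
  set j₀ := if r = 0 then m else r with hj₀
  have hj₀1 : 1 ≤ j₀ := by rw [hj₀]; split <;> omega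
  have hj₀m : j₀ ≤ m := by rw [hj₀]; split <;> omega
  have hj₀mod : j₀ % m = r := by
    rw [hj₀]; split
    · simp [Nat.mod_self]; omega
    · exact Nat.mod_eq_of_lt hr
  ext j
  simp only [Finset.mem_filter, Finset.mem_Ico, Finset.mem_image, Finset.mem_range,
    Nat.lt_succ_iff]
  constructor
  · rintro ⟨⟨h1, h2⟩, h3⟩
    have hdm : m * (j / m) + r = j := by rw [← h3]; exact Nat.div_add_mod j m
    by_cases hr0 : r = 0
    · have hj0 : j₀ = m := by rw [hj₀, if_pos hr0]
      have hq1 : 1 ≤ j / m := (Nat.one_le_div_iff hm).2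
        (Nat.le_of_dvd (by omega) (Nat.dvd_of_mod_eq_zero (by omega)))
      obtain ⟨q, hq⟩ : ∃ q, j / m = q + 1 := ⟨j / m - 1, by omega⟩
      rw [hq] at hdm
      refine ⟨q, ?_, ?_⟩
      · rw [Nat.le_div_iff_mul_le hm]
        have e1 : m * (q + 1) = m * q + m := by ring
        have e2 : q * m = m * q := by ring
        omega
      · have e1 : m * (q + 1) = m * q + m := by ring
        have e2 : q * m = m * q := by ring
        omega
    · have hj0 : j₀ = r := by rw [hj₀, if_neg hr0]
      refine ⟨j / m, ?_, ?_⟩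
      · rw [Nat.le_div_iff_mul_le hm]
        have e1 : (j / m) * m = m * (j / m) := by ring
        omega
      · have e1 : (j / m) * m = m * (j / m) := by ring
        omega
  · rintro ⟨t, ht, rfl⟩
    have h5 : (n - 1 - j₀) / m * m ≤ n - 1 - j₀ := Nat.div_mul_le_self _ _
    have h6 : t * m ≤ (n - 1 - j₀) / m * m := Nat.mul_le_mul_right m ht
    refine ⟨⟨by omega, by omega⟩, ?_⟩
    rw [Nat.add_mul_mod_self_right]
    exact hj₀mod

set_option maxHeartbeats 1000000 in

lemma riemann_bound (a b : ℝ) (ha : 0 < a) (hb : 0 < b) {n m j₀ : ℕ}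
    (hm : 0 < m) (hj₀1 : 1 ≤ j₀) (hj₀m : j₀ ≤ m) (hmn : m < n) (hj₀n : j₀ ≤ n - 1) :
    |(∑ t ∈ Finset.range ((n - 1 - j₀) / m + 1),
        ((j₀ + t * m : ℕ) : ℝ) ^ a * ((n : ℝ) - ((j₀ + t * m : ℕ) : ℝ)) ^ b)
      - (∫ x in (0:ℝ)..(n:ℝ), x ^ a * ((n:ℝ) - x) ^ b) / m|
    ≤ 4 * (n : ℝ) ^ (a + b) := by
  set T := (n - 1 - j₀) / m + 1 with hT
  set N : ℝ := (n : ℝ) with hN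
  set M : ℝ := N ^ (a + b) with hM
  set F : ℝ → ℝ := fun x => x ^ a * (N - x) ^ b with hF
  -- nat-level interval facts
  have hctn : ∀ t < T, j₀ + t * m + 1 ≤ n := by
    intro t ht
    have ht' : t ≤ (n - 1 - j₀) / m := by omega
    have h6 : t * m ≤ (n - 1 - j₀) / m * m := Nat.mul_le_mul_right m ht'
    have h5 : (n - 1 - j₀) / m * m ≤ n - 1 - j₀ := Nat.div_mul_le_self _ _
    omega
  have hcT : n ≤ j₀ + T * m ∧ j₀ + T * m + 1 ≤ n + m := by
    have h1 := Nat.div_add_mod (n - 1 - j₀) m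
    have h2 : (n - 1 - j₀) % m < m := Nat.mod_lt _ hm
    have h3 : T * m = m * ((n - 1 - j₀) / m) + m := by rw [hT]; ring
    have h5 : (n - 1 - j₀) / m * m ≤ n - 1 - j₀ := Nat.div_mul_le_self _ _
    have h6 : (n - 1 - j₀) / m * m = m * ((n - 1 - j₀) / m) := by ring
    omega
  -- real-level setup
  have hN2 : (2:ℝ) ≤ N := by rw [hN]; exact_mod_cast by omega
  have hN0 : (0:ℝ) < N := by linarith
  have hmR : (1:ℝ) ≤ (m:ℝ) := by exact_mod_cast hm
  have hmR0 : (0:ℝ) < (m:ℝ) := by linarith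
  set c : ℕ → ℝ := fun t => (j₀ : ℝ) + t * m with hc
  set d : ℕ → ℝ := fun t => min (c t) N with hd
  have hc_nonneg : ∀ t, 0 ≤ c t := by
    intro t; simp only [hc]; positivity
  have hcmono : ∀ s t : ℕ, s ≤ t → c s ≤ c t := by
    intro s t hst
    simp only [hc]
    have h1 : (s:ℝ) ≤ t := by exact_mod_cast hst
    nlinarith
  have hdmono : ∀ s t : ℕ, s ≤ t → d s ≤ d t := fun s t hst =>
    min_le_min (hcmono s t hst) le_rfl
  have hd_nonneg : ∀ t, 0 ≤ d t := fun t => le_min (hc_nonneg t) hN0.le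
  have hd_le_N : ∀ t, d t ≤ N := fun t => min_le_right _ _
  have hd0 : d 0 = (j₀ : ℝ) := by
    simp only [hd, hc]
    rw [min_eq_left]
    · push_cast; ring
    · have h1 : (j₀:ℝ) ≤ N := by rw [hN]; exact_mod_cast by omega
      push_cast; linarith
  have hdT : d T = N := by
    simp only [hd, hc]
    rw [min_eq_right]
    have h1 : (n:ℝ) ≤ (j₀:ℝ) + (T:ℝ) * m := by exact_mod_cast hcT.1
    rw [hN]; linarith
  have hdc : ∀ t < T, d t = c t := by
    intro t ht
    simp only [hd]
    rw [min_eq_left]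
    have h1 : (j₀:ℝ) + (t:ℝ) * m + 1 ≤ (n:ℝ) := by exact_mod_cast hctn t ht
    simp only [hc, hN]; linarith
  have hlen : ∀ t, d (t+1) - d t ≤ (m:ℝ) := by
    intro t
    have hc1 : c (t+1) = c t + m := by simp only [hc]; push_cast; ring
    rcases le_total (c t) N with h | h
    · have e1 : d t = c t := min_eq_left h
      have e2 : d (t+1) ≤ c (t+1) := min_le_left _ _
      rw [e1]; linarith
    · have e1 : d t = N := min_eq_right h
      have e2 : d (t+1) ≤ N := min_le_right _ _
      rw [e1]; linarith
  -- continuity & integrability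
  have hFc : Continuous F := by
    apply Continuous.mul
    · exact Real.continuous_rpow_const ha.le
    · exact (Real.continuous_rpow_const hb.le).comp (continuous_const.sub continuous_id)
  have hInt : ∀ u v : ℝ, IntervalIntegrable F MeasureTheory.volume u v := fun u v =>
    hFc.intervalIntegrable u v
  -- bounds on F
  have hMnn : 0 ≤ M := Real.rpow_nonneg hN0.le _
  have hMsplit : M = N ^ a * N ^ b := by rw [hM, Real.rpow_add hN0]
  have hFbound : ∀ x, 0 ≤ x → x ≤ N → 0 ≤ F x ∧ F x ≤ M := by
    intro x hx0 hxN
    have h1 : 0 ≤ x ^ a := Real.rpow_nonneg hx0 a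
    have h2 : 0 ≤ (N - x) ^ b := Real.rpow_nonneg (by linarith) b
    have h3 : x ^ a ≤ N ^ a := Real.rpow_le_rpow hx0 hxN ha.le
    have h4 : (N - x) ^ b ≤ N ^ b := Real.rpow_le_rpow (by linarith) (by linarith) hb.le
    refine ⟨mul_nonneg h1 h2, ?_⟩
    rw [hMsplit]
    exact mul_le_mul h3 h4 h2 (Real.rpow_nonneg hN0.le a)
  set D : ℕ → ℝ := fun t => (d (t+1)) ^ a * (N - d t) ^ b - (d t) ^ a * (N - d (t+1)) ^ b with hD
  have hDnn : ∀ t, 0 ≤ D t := by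
    intro t
    have huv := hdmono t (t+1) (Nat.le_succ t)
    have h1 : (d t) ^ a ≤ (d (t+1)) ^ a := Real.rpow_le_rpow (hd_nonneg t) huv ha.le
    have h2 : (N - d (t+1)) ^ b ≤ (N - d t) ^ b :=
      Real.rpow_le_rpow (by have := hd_le_N (t+1); linarith) (by linarith) hb.le
    have h3 : 0 ≤ (d t) ^ a := Real.rpow_nonneg (hd_nonneg t) a
    have h4 : 0 ≤ (N - d (t+1)) ^ b := Real.rpow_nonneg (by have := hd_le_N (t+1); linarith) b
    simp only [hD]
    nlinarith
  -- per-interval bound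
  have hper : ∀ t ∈ Finset.range T,
      |(m:ℝ) * F (d t) - ∫ x in d t..d (t+1), F x|
        ≤ ((m:ℝ) - (d (t+1) - d t)) * M + (m:ℝ) * D t := by
    intro t ht
    have huv : d t ≤ d (t+1) := hdmono t (t+1) (Nat.le_succ t)
    have hu0 := hd_nonneg t
    have hvN := hd_le_N (t+1)
    have huN := hd_le_N t
    have hv0 := hd_nonneg (t+1)
    have hptw : ∀ x ∈ Set.uIoc (d t) (d (t+1)), ‖F (d t) - F x‖ ≤ D t := by
      intro x hx
      rw [Set.uIoc_of_le huv] at hx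
      obtain ⟨hx1, hx2⟩ := hx
      have hx0 : 0 ≤ x := le_trans hu0 hx1.le
      have hxN : x ≤ N := le_trans hx2 hvN
      have hA1 : (d t) ^ a ≤ x ^ a := Real.rpow_le_rpow hu0 hx1.le ha.le
      have hA2 : x ^ a ≤ (d (t+1)) ^ a := Real.rpow_le_rpow hx0 hx2 ha.le
      have hB1 : (N - x) ^ b ≤ (N - d t) ^ b :=
        Real.rpow_le_rpow (by linarith) (by linarith) hb.le
      have hB2 : (N - d (t+1)) ^ b ≤ (N - x) ^ b :=
        Real.rpow_le_rpow (by linarith) (by linarith) hb.le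
      have hB1' : (N - d t) ^ b ≤ (N - d t) ^ b := le_rfl
      have hA0 : 0 ≤ (d t) ^ a := Real.rpow_nonneg hu0 a
      have hB0 : 0 ≤ (N - d (t+1)) ^ b := Real.rpow_nonneg (by linarith) b
      have hxA0 : 0 ≤ x ^ a := Real.rpow_nonneg hx0 a
      have hxB0 : 0 ≤ (N - x) ^ b := Real.rpow_nonneg (by linarith) b
      have hBt0 : 0 ≤ (N - d t) ^ b := Real.rpow_nonneg (by linarith) b
      have hAt0 : 0 ≤ (d (t+1)) ^ a := Real.rpow_nonneg hv0 a
      have hup : F x ≤ (d (t+1)) ^ a * (N - d t) ^ b := by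
        simp only [hF]; exact mul_le_mul hA2 hB1 hxB0 hAt0
      have hlo : (d t) ^ a * (N - d (t+1)) ^ b ≤ F x := by
        simp only [hF]; exact mul_le_mul hA1 hB2 hB0 hxA0
      have hup' : F (d t) ≤ (d (t+1)) ^ a * (N - d t) ^ b := by
        simp only [hF]
        exact mul_le_mul (Real.rpow_le_rpow hu0 huv ha.le) le_rfl hBt0 hAt0
      have hB3 : (N - d (t+1)) ^ b ≤ (N - d t) ^ b :=
        Real.rpow_le_rpow (by linarith) (by linarith) hb.le
      have hlo' : (d t) ^ a * (N - d (t+1)) ^ b ≤ F (d t) := by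
        simp only [hF]
        exact mul_le_mul le_rfl hB3 hB0 hA0
      rw [Real.norm_eq_abs, abs_le]
      simp only [hD]
      constructor <;> linarith
    have habs1 : ‖∫ x in d t..d (t+1), (F (d t) - F x)‖ ≤ D t * |d (t+1) - d t| :=
      intervalIntegral.norm_integral_le_of_norm_le_const hptw
    have hsub : ∫ x in d t..d (t+1), (F (d t) - F x)
        = (d (t+1) - d t) * F (d t) - ∫ x in d t..d (t+1), F x := by
      rw [intervalIntegral.integral_sub (intervalIntegrable_const) (hInt _ _),
        intervalIntegral.integral_const, smul_eq_mul]
    have hFu := hFbound (d t) hu0 huN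
    have hlent := hlen t
    have key : (m:ℝ) * F (d t) - ∫ x in d t..d (t+1), F x
        = ((m:ℝ) - (d (t+1) - d t)) * F (d t) + ∫ x in d t..d (t+1), (F (d t) - F x) := by
      rw [hsub]; ring
    rw [key]
    have h1 : |((m:ℝ) - (d (t+1) - d t)) * F (d t)| ≤ ((m:ℝ) - (d (t+1) - d t)) * M := by
      rw [abs_mul, abs_of_nonneg (by linarith), abs_of_nonneg hFu.1]
      exact mul_le_mul_of_nonneg_left hFu.2 (by linarith)
    have h2 : |∫ x in d t..d (t+1), (F (d t) - F x)| ≤ (m:ℝ) * D t := by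
      rw [← Real.norm_eq_abs]
      refine le_trans habs1 ?_
      rw [abs_of_nonneg (by linarith)]
      calc D t * (d (t+1) - d t) ≤ D t * m := by
            exact mul_le_mul_of_nonneg_left hlent (hDnn t)
        _ = (m:ℝ) * D t := by ring
    calc |((m:ℝ) - (d (t+1) - d t)) * F (d t) + ∫ x in d t..d (t+1), (F (d t) - F x)|
        ≤ |((m:ℝ) - (d (t+1) - d t)) * F (d t)| + |∫ x in d t..d (t+1), (F (d t) - F x)| :=
          abs_add_le _ _
      _ ≤ ((m:ℝ) - (d (t+1) - d t)) * M + (m:ℝ) * D t := add_le_add h1 h2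
  -- telescoping sums
  have hDsum : ∑ t ∈ Finset.range T, D t ≤ 2 * M := by
    have hstep : ∀ t ∈ Finset.range T,
        D t ≤ ((d (t+1)) ^ a - (d t) ^ a) * N ^ b
            + N ^ a * ((N - d t) ^ b - (N - d (t+1)) ^ b) := by
      intro t _
      have huv := hdmono t (t+1) (Nat.le_succ t)
      have hA1 : (d t) ^ a ≤ (d (t+1)) ^ a := Real.rpow_le_rpow (hd_nonneg t) huv ha.le
      have hA2 : (d (t+1)) ^ a ≤ N ^ a := Real.rpow_le_rpow (hd_nonneg _) (hd_le_N _) ha.le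
      have hB2 : (N - d (t+1)) ^ b ≤ (N - d t) ^ b :=
        Real.rpow_le_rpow (by have := hd_le_N (t+1); linarith) (by have := hdmono t (t+1) (Nat.le_succ t); linarith) hb.le
      have hB1 : (N - d t) ^ b ≤ N ^ b :=
        Real.rpow_le_rpow (by have := hd_le_N t; linarith) (by have := hd_nonneg t; linarith) hb.le
      have h3 : 0 ≤ (d t) ^ a := Real.rpow_nonneg (hd_nonneg t) a
      have h4 : 0 ≤ (N - d (t+1)) ^ b := Real.rpow_nonneg (by have := hd_le_N (t+1); linarith) b
      simp only [hD]
      nlinarith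
    calc ∑ t ∈ Finset.range T, D t
        ≤ ∑ t ∈ Finset.range T, (((d (t+1)) ^ a - (d t) ^ a) * N ^ b
            + N ^ a * ((N - d t) ^ b - (N - d (t+1)) ^ b)) := Finset.sum_le_sum hstep
      _ = ((d T) ^ a - (d 0) ^ a) * N ^ b + N ^ a * ((N - d 0) ^ b - (N - d T) ^ b) := by
          rw [Finset.sum_add_distrib, ← Finset.sum_mul, ← Finset.mul_sum,
            Finset.sum_range_sub (fun t => (d t) ^ a),
            Finset.sum_range_sub' (fun t => (N - d t) ^ b)]
      _ ≤ N ^ a * N ^ b + N ^ a * N ^ b := by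
          have h1 : (d T) ^ a = N ^ a := by rw [hdT]
          have h2 : 0 ≤ (d 0) ^ a := Real.rpow_nonneg (hd_nonneg 0) a
          have h3 : (N - d 0) ^ b ≤ N ^ b :=
            Real.rpow_le_rpow (by have := hd_le_N 0; linarith) (by have := hd_nonneg 0; linarith) hb.le
          have h4 : 0 ≤ (N - d T) ^ b := Real.rpow_nonneg (by rw [hdT]; linarith) b
          have h5 : 0 ≤ N ^ a := Real.rpow_nonneg hN0.le a
          have h6 : 0 ≤ N ^ b := Real.rpow_nonneg hN0.le b
          nlinarith
      _ = 2 * M := by rw [hMsplit]; ring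
  have hslack : ∑ t ∈ Finset.range T, ((m:ℝ) - (d (t+1) - d t)) ≤ (m:ℝ) := by
    rw [Finset.sum_sub_distrib, Finset.sum_const, Finset.card_range,
      Finset.sum_range_sub d, hd0, hdT, nsmul_eq_mul]
    have h1 : (j₀:ℝ) + (T:ℝ) * m + 1 ≤ N + m := by
      rw [hN]; exact_mod_cast hcT.2
    linarith
  -- assemble
  have hsum_int : ∑ t ∈ Finset.range T, ∫ x in d t..d (t+1), F x = ∫ x in (d 0)..(d T), F x :=
    intervalIntegral.sum_integral_adjacent_intervals (fun k _ => hInt _ _)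
  have hsplit : ∫ x in (0:ℝ)..N, F x = (∫ x in (0:ℝ)..d 0, F x) + ∫ x in (d 0)..(d T), F x := by
    rw [← hdT, intervalIntegral.integral_add_adjacent_intervals (hInt _ _) (hInt _ _)]
  have hhead : |∫ x in (0:ℝ)..d 0, F x| ≤ (m:ℝ) * M := by
    have hptw : ∀ x ∈ Set.uIoc (0:ℝ) (d 0), ‖F x‖ ≤ M := by
      intro x hx
      rw [Set.uIoc_of_le (hd_nonneg 0)] at hx
      have h := hFbound x hx.1.le (le_trans hx.2 (hd_le_N 0))
      rw [Real.norm_eq_abs, abs_of_nonneg h.1]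
      exact h.2
    have := intervalIntegral.norm_integral_le_of_norm_le_const hptw
    rw [Real.norm_eq_abs] at this
    refine le_trans this ?_
    rw [sub_zero, abs_of_nonneg (hd_nonneg 0), hd0]
    have hj0m : (j₀:ℝ) ≤ (m:ℝ) := by exact_mod_cast hj₀m
    nlinarith
  have hmain : |(m:ℝ) * (∑ t ∈ Finset.range T, F (d t)) - ∫ x in (0:ℝ)..N, F x|
      ≤ 4 * (m:ℝ) * M := by
    have e1 : (m:ℝ) * (∑ t ∈ Finset.range T, F (d t)) - ∫ x in (0:ℝ)..N, F x
        = (∑ t ∈ Finset.range T, ((m:ℝ) * F (d t) - ∫ x in d t..d (t+1), F x))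
          - ∫ x in (0:ℝ)..d 0, F x := by
      rw [Finset.sum_sub_distrib, hsum_int, hsplit, Finset.mul_sum]; ring
    rw [e1]
    calc |(∑ t ∈ Finset.range T, ((m:ℝ) * F (d t) - ∫ x in d t..d (t+1), F x))
          - ∫ x in (0:ℝ)..d 0, F x|
        ≤ |∑ t ∈ Finset.range T, ((m:ℝ) * F (d t) - ∫ x in d t..d (t+1), F x)|
          + |∫ x in (0:ℝ)..d 0, F x| := abs_sub _ _
      _ ≤ (∑ t ∈ Finset.range T, |(m:ℝ) * F (d t) - ∫ x in d t..d (t+1), F x|)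
          + (m:ℝ) * M := add_le_add (Finset.abs_sum_le_sum_abs _ _) hhead
      _ ≤ (∑ t ∈ Finset.range T, (((m:ℝ) - (d (t+1) - d t)) * M + (m:ℝ) * D t))
          + (m:ℝ) * M := by
            exact add_le_add (Finset.sum_le_sum hper) le_rfl
      _ = (∑ t ∈ Finset.range T, ((m:ℝ) - (d (t+1) - d t))) * M
          + (m:ℝ) * (∑ t ∈ Finset.range T, D t) + (m:ℝ) * M := by
            rw [Finset.sum_add_distrib, ← Finset.sum_mul, ← Finset.mul_sum]
      _ ≤ (m:ℝ) * M + (m:ℝ) * (2 * M) + (m:ℝ) * M := by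
            have := mul_le_mul_of_nonneg_right hslack hMnn
            have := mul_le_mul_of_nonneg_left hDsum hmR0.le
            linarith
      _ = 4 * (m:ℝ) * M := by ring
  -- final conversion
  have hsum_eq : (∑ t ∈ Finset.range T,
        ((j₀ + t * m : ℕ) : ℝ) ^ a * ((n : ℝ) - ((j₀ + t * m : ℕ) : ℝ)) ^ b)
      = ∑ t ∈ Finset.range T, F (d t) := by
    apply Finset.sum_congr rfl
    intro t ht
    rw [Finset.mem_range] at ht
    rw [hdc t ht]
    simp only [hF, hc, hN]
    push_cast
    ring_nf
  rw [hsum_eq]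
  have e2 : (∑ t ∈ Finset.range T, F (d t)) - (∫ x in (0:ℝ)..N, F x) / m
      = ((m:ℝ) * (∑ t ∈ Finset.range T, F (d t)) - ∫ x in (0:ℝ)..N, F x) / m := by
    field_simp
  rw [hN] at e2 ⊢
  rw [e2, abs_div, abs_of_pos hmR0, div_le_iff₀ hmR0]
  calc |(m:ℝ) * (∑ t ∈ Finset.range T, F (d t)) - ∫ x in (0:ℝ)..(n:ℝ), F x|
      ≤ 4 * (m:ℝ) * M := by rw [hN] at hmain; exact hmain
    _ = 4 * (n:ℝ) ^ (a+b) * m := by rw [hM, hN]; ring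


theorem stmt4 (a b : ℝ) (ha : 0 < a) (hb : 0 < b) :
    ∃ C : ℝ, ∀ (n m : ℕ), 0 < n → 0 < m → ∀ k : ℤ,
      |(∑ j ∈ (Finset.Ico 1 n).filter (fun j : ℕ => (j : ℤ) ≡ k [ZMOD (m : ℤ)]),
          (j : ℝ) ^ a * ((n - j : ℕ) : ℝ) ^ b)
        - (n : ℝ) ^ (a + b + 1) / (m : ℝ)
            * (Real.Gamma (a + 1) * Real.Gamma (b + 1) / Real.Gamma (a + b + 2))|
      ≤ C * (n : ℝ) ^ (a + b) := by
  set B : ℝ := Real.Gamma (a + 1) * Real.Gamma (b + 1) / Real.Gamma (a + b + 2) with hBdef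
  have hB0 : 0 < B := by
    rw [hBdef]
    have g1 := Real.Gamma_pos_of_pos (show (0:ℝ) < a + 1 by linarith)
    have g2 := Real.Gamma_pos_of_pos (show (0:ℝ) < b + 1 by linarith)
    have g3 := Real.Gamma_pos_of_pos (show (0:ℝ) < a + b + 2 by linarith)
    positivity
  refine ⟨5 + B, ?_⟩
  intro n m hn hm k
  have hMnn : (0:ℝ) ≤ (n:ℝ) ^ (a + b) := Real.rpow_nonneg (Nat.cast_nonneg n) _
  set M : ℝ := (n:ℝ) ^ (a + b) with hM
  -- rewrite the congruence filter as a mod filter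
  set r : ℕ := (k % (m:ℤ)).toNat with hrdef
  have hkm1 : 0 ≤ k % (m:ℤ) := Int.emod_nonneg k (by exact_mod_cast hm.ne')
  have hkm2 : k % (m:ℤ) < m := Int.emod_lt_of_pos k (by exact_mod_cast hm)
  have hr : r < m := by rw [hrdef]; omega
  have hfilter : (Finset.Ico 1 n).filter (fun j : ℕ => (j : ℤ) ≡ k [ZMOD (m : ℤ)])
      = (Finset.Ico 1 n).filter (fun j : ℕ => j % m = r) := by
    apply Finset.filter_congr
    intro j _
    simp only [Int.ModEq, Int.emod_emod_of_dvd]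
    have e1 : (j:ℤ) % (m:ℤ) = ((j % m : ℕ) : ℤ) := by
      push_cast; rfl
    rw [e1, hrdef]
    constructor
    · intro h; omega
    · intro h; omega
  rw [hfilter]
  have hsum_nonneg : (0:ℝ) ≤ ∑ j ∈ (Finset.Ico 1 n).filter (fun j : ℕ => j % m = r),
      (j : ℝ) ^ a * ((n - j : ℕ) : ℝ) ^ b := by
    apply Finset.sum_nonneg
    intro j _
    exact mul_nonneg (Real.rpow_nonneg (Nat.cast_nonneg j) a)
      (Real.rpow_nonneg (Nat.cast_nonneg _) b)
  have hterm_bound : ∀ j ∈ (Finset.Ico 1 n).filter (fun j : ℕ => j % m = r),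
      (j : ℝ) ^ a * ((n - j : ℕ) : ℝ) ^ b ≤ M := by
    intro j hj
    simp only [Finset.mem_filter, Finset.mem_Ico] at hj
    have hjn : (j:ℝ) ≤ (n:ℝ) := by exact_mod_cast (by omega : j ≤ n)
    have hnjn : ((n - j : ℕ):ℝ) ≤ (n:ℝ) := by exact_mod_cast (by omega : n - j ≤ n)
    have h1 : (j:ℝ) ^ a ≤ (n:ℝ) ^ a := Real.rpow_le_rpow (Nat.cast_nonneg j) hjn ha.le
    have h2 : ((n - j : ℕ):ℝ) ^ b ≤ (n:ℝ) ^ b :=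
      Real.rpow_le_rpow (Nat.cast_nonneg _) hnjn hb.le
    have h3 : (0:ℝ) ≤ ((n - j : ℕ):ℝ) ^ b := Real.rpow_nonneg (Nat.cast_nonneg _) b
    have h4 : (0:ℝ) ≤ (n:ℝ) ^ a := Real.rpow_nonneg (Nat.cast_nonneg n) a
    calc (j : ℝ) ^ a * ((n - j : ℕ) : ℝ) ^ b ≤ (n:ℝ) ^ a * (n:ℝ) ^ b :=
          mul_le_mul h1 h2 h3 h4
      _ = M := by rw [hM, Real.rpow_add (by exact_mod_cast hn : (0:ℝ) < (n:ℝ))]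
  by_cases hmn : m < n
  · -- main case
    set j₀ : ℕ := if r = 0 then m else r with hj₀def
    have hj₀1 : 1 ≤ j₀ := by rw [hj₀def]; split <;> omega
    have hj₀m : j₀ ≤ m := by rw [hj₀def]; split <;> omega
    have hj₀n : j₀ ≤ n - 1 := by omega
    have himg := filter_mod_eq_image hm hr hmn
    rw [← hj₀def] at himg
    rw [himg]
    have hinj : ∀ t1 ∈ Finset.range ((n - 1 - j₀) / m + 1), ∀ t2 ∈ Finset.range ((n - 1 - j₀) / m + 1),
        j₀ + t1 * m = j₀ + t2 * m → t1 = t2 := by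
      intro t1 _ t2 _ h
      have : t1 * m = t2 * m := by omega
      exact Nat.eq_of_mul_eq_mul_right hm this
    rw [Finset.sum_image hinj]
    have hctn : ∀ t ∈ Finset.range ((n - 1 - j₀) / m + 1), j₀ + t * m ≤ n := by
      intro t ht
      rw [Finset.mem_range, Nat.lt_succ_iff] at ht
      have h6 : t * m ≤ (n - 1 - j₀) / m * m := Nat.mul_le_mul_right m ht
      have h5 : (n - 1 - j₀) / m * m ≤ n - 1 - j₀ := Nat.div_mul_le_self _ _
      omega
    have hcast : ∀ t ∈ Finset.range ((n - 1 - j₀) / m + 1),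
        ((j₀ + t * m : ℕ) : ℝ) ^ a * ((n - (j₀ + t * m) : ℕ) : ℝ) ^ b
          = ((j₀ + t * m : ℕ) : ℝ) ^ a * ((n : ℝ) - ((j₀ + t * m : ℕ) : ℝ)) ^ b := by
      intro t ht
      rw [Nat.cast_sub (hctn t ht)]
    rw [Finset.sum_congr rfl hcast]
    have hbeta := beta_real a b ha hb (show (0:ℝ) < (n:ℝ) by exact_mod_cast hn)
    have hrb := riemann_bound a b ha hb hm hj₀1 hj₀m hmn hj₀n
    rw [hbeta] at hrb
    have e3 : (n:ℝ) ^ (a + b + 1) * B / (m:ℝ) = (n:ℝ) ^ (a + b + 1) / (m:ℝ) * B := by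
      ring
    rw [e3] at hrb
    calc |(∑ t ∈ Finset.range ((n - 1 - j₀) / m + 1),
            ((j₀ + t * m : ℕ) : ℝ) ^ a * ((n : ℝ) - ((j₀ + t * m : ℕ) : ℝ)) ^ b)
          - (n : ℝ) ^ (a + b + 1) / (m : ℝ) * B|
        ≤ 4 * (n:ℝ) ^ (a + b) := hrb
      _ ≤ (5 + B) * (n:ℝ) ^ (a + b) := by nlinarith
  · -- m ≥ n : at most one term
    push_neg at hmn
    set S := (Finset.Ico 1 n).filter (fun j : ℕ => j % m = r) with hS
    have hcard : S.card ≤ 1 := by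
      rw [Finset.card_le_one]
      intro j1 hj1 j2 hj2
      rw [hS, Finset.mem_filter, Finset.mem_Ico] at hj1 hj2
      have e1 : j1 % m = j1 := Nat.mod_eq_of_lt (by omega)
      have e2 : j2 % m = j2 := Nat.mod_eq_of_lt (by omega)
      omega
    have hsum_le : (∑ j ∈ S, (j : ℝ) ^ a * ((n - j : ℕ) : ℝ) ^ b) ≤ M := by
      calc (∑ j ∈ S, (j : ℝ) ^ a * ((n - j : ℕ) : ℝ) ^ b) ≤ S.card • M :=
            Finset.sum_le_card_nsmul S _ M hterm_bound
        _ ≤ M := by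
            rcases Nat.le_one_iff_eq_zero_or_eq_one.1 hcard with h | h <;> rw [h] <;> simp [hMnn]
    have hNm : (n:ℝ) ≤ (m:ℝ) := by exact_mod_cast hmn
    have hN0 : (0:ℝ) < (n:ℝ) := by exact_mod_cast hn
    have hm0 : (0:ℝ) < (m:ℝ) := by exact_mod_cast hm
    have hterm_pos : (0:ℝ) ≤ (n : ℝ) ^ (a + b + 1) / (m : ℝ) * B := by positivity
    have hterm_le : (n : ℝ) ^ (a + b + 1) / (m : ℝ) * B ≤ M * B := by
      have e1 : (n:ℝ) ^ (a + b + 1) = M * (n:ℝ) := by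
        rw [hM, ← Real.rpow_add_one hN0.ne']
      rw [e1]
      have h2 : M * (n:ℝ) / (m:ℝ) ≤ M := by
        rw [div_le_iff₀ hm0]
        nlinarith
      nlinarith
    rw [abs_le]
    constructor <;> nlinarith
end

section
/- Let r and s be complex numbers with Re(r) > 1 and Re(s) > 1. Then the double series Σ over pairs of positive integers (n, m) with gcd(m, n) = 1 of n^{−r}·m^{−s} converges absolutely and equals ζ(r)·ζ(s)/ζ(r+s). -/
open Complex Function

private lemma summable_norm_cpow {r : ℂ} (hr : 1 < r.re) :
    Summable (fun n : ℕ => ‖(n : ℂ) ^ (-r)‖) := by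
  have hre : -r ≠ 0 := neg_ne_zero.mpr fun h => by rw [h, Complex.zero_re] at hr; linarith
  have key : ∀ n : ℕ, ‖(n : ℂ) ^ (-r)‖ = (n : ℝ) ^ (-r.re) := by
    intro n
    rcases Nat.eq_zero_or_pos n with h | h
    · subst h
      rw [Nat.cast_zero, zero_cpow hre, Nat.cast_zero,
        Real.zero_rpow (by simp only [ne_eq, neg_eq_zero]; linarith)]
      simp
    · rw [norm_natCast_cpow_of_pos h, neg_re]
  simp only [key]
  exact Real.summable_nat_rpow.mpr (by linarith)

private lemma tsum_cpow_eq_zeta {r : ℂ} (hr : 1 < r.re) :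
    ∑' n : ℕ, (n : ℂ) ^ (-r) = riemannZeta r := by
  rw [zeta_eq_tsum_one_div_nat_cpow hr]
  refine tsum_congr fun n => ?_
  rw [cpow_neg, one_div]

theorem stmt5 (r s : ℂ) (hr : 1 < r.re) (hs : 1 < s.re) :
    Summable (fun p : ℕ × ℕ =>
      ‖if 0 < p.1 ∧ 0 < p.2 ∧ Nat.gcd p.2 p.1 = 1 then
          (p.1 : ℂ) ^ (-r) * (p.2 : ℂ) ^ (-s) else 0‖) ∧
    (∑' p : ℕ × ℕ,
        if 0 < p.1 ∧ 0 < p.2 ∧ Nat.gcd p.2 p.1 = 1 then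
          (p.1 : ℂ) ^ (-r) * (p.2 : ℂ) ^ (-s) else 0)
      = riemannZeta r * riemannZeta s / riemannZeta (r + s) := by
  have hrs : 1 < (r + s).re := by simp [add_re]; linarith
  set f : ℕ × ℕ → ℂ := fun p =>
    if 0 < p.1 ∧ 0 < p.2 ∧ Nat.gcd p.2 p.1 = 1 then
      (p.1 : ℂ) ^ (-r) * (p.2 : ℂ) ^ (-s) else 0 with hf
  have hFr := summable_norm_cpow hr
  have hFs := summable_norm_cpow hs
  have hFrs := summable_norm_cpow hrs
  -- summability of the coprime-restricted sum
  have hprod : Summable (fun z : ℕ × ℕ => ‖(z.1 : ℂ) ^ (-r) * (z.2 : ℂ) ^ (-s)‖) := by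
    have := summable_mul_of_summable_norm (R := ℝ)
      (f := fun n : ℕ => ‖(n : ℂ) ^ (-r)‖) (g := fun n : ℕ => ‖(n : ℂ) ^ (-s)‖)
      (by simpa using hFr) (by simpa using hFs)
    simpa [norm_mul] using this
  have h1 : Summable fun p : ℕ × ℕ => ‖f p‖ := by
    refine hprod.of_nonneg_of_le (fun _ => norm_nonneg _) fun p => ?_
    by_cases h : 0 < p.1 ∧ 0 < p.2 ∧ Nat.gcd p.2 p.1 = 1
    · simp [hf, h]
    · simp only [hf, if_neg h, norm_zero]
      positivity
  refine ⟨h1, ?_⟩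
  -- the full double sum
  have hfull : (∑' p : ℕ × ℕ, (p.1 : ℂ) ^ (-r) * (p.2 : ℂ) ^ (-s))
      = riemannZeta r * riemannZeta s := by
    rw [← tsum_mul_tsum_of_summable_norm hFr hFs, tsum_cpow_eq_zeta hr, tsum_cpow_eq_zeta hs]
  -- define H on ℕ × (ℕ × ℕ)
  set H : ℕ × (ℕ × ℕ) → ℂ := fun q => (q.1 : ℂ) ^ (-(r + s)) * f q.2 with hH
  have hHsum : (∑' q : ℕ × (ℕ × ℕ), H q) = riemannZeta (r + s) * ∑' p, f p := by
    rw [hH, ← tsum_mul_tsum_of_summable_norm hFrs h1, tsum_cpow_eq_zeta hrs]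
  -- support of H
  have hrne : (-r : ℂ) ≠ 0 := neg_ne_zero.mpr fun h => by
    rw [h, Complex.zero_re] at hr; linarith
  have hsne : (-s : ℂ) ≠ 0 := neg_ne_zero.mpr fun h => by
    rw [h, Complex.zero_re] at hs; linarith
  have hrsne : (-(r + s) : ℂ) ≠ 0 := neg_ne_zero.mpr fun h => by
    rw [h, Complex.zero_re] at hrs; linarith
  have hne : ∀ (k : ℕ) (w : ℂ), k ≠ 0 → (k : ℂ) ^ w ≠ 0 := fun k w hk h =>
    hk (by exact_mod_cast ((cpow_eq_zero_iff _ _).mp h).1)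
  have hsupp : ∀ q : ℕ × (ℕ × ℕ), H q ≠ 0 →
      0 < q.1 ∧ 0 < q.2.1 ∧ 0 < q.2.2 ∧ Nat.gcd q.2.2 q.2.1 = 1 := by
    rintro ⟨d, n, m⟩ hq
    simp only [hH, hf, mul_ne_zero_iff] at hq
    obtain ⟨hd, hfq⟩ := hq
    by_cases h : 0 < n ∧ 0 < m ∧ Nat.gcd m n = 1
    · refine ⟨?_, h.1, h.2.1, h.2.2⟩
      rcases Nat.eq_zero_or_pos d with h0 | h0
      · exfalso; apply hd
        rw [h0, Nat.cast_zero, zero_cpow hrsne]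
      · exact h0
    · simp [if_neg h] at hfq
  -- the key bijection argument
  have hbij : (∑' p : ℕ × ℕ, (p.1 : ℂ) ^ (-r) * (p.2 : ℂ) ^ (-s))
      = ∑' q : ℕ × (ℕ × ℕ), H q := by
    refine tsum_eq_tsum_of_ne_zero_bij
      (fun q => (q.1.1 * q.1.2.1, q.1.1 * q.1.2.2)) ?_ ?_ ?_
    · rintro ⟨⟨d, n, m⟩, hq⟩ ⟨⟨d', n', m'⟩, hq'⟩ h
      obtain ⟨hd, hn, hm, hco⟩ := hsupp _ hq
      obtain ⟨hd', hn', hm', hco'⟩ := hsupp _ hq'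
      simp only [Prod.mk.injEq] at h
      obtain ⟨h1', h2'⟩ := h
      have hdd : d = d' := by
        have e1 : Nat.gcd (d * n) (d * m) = d := by
          rw [Nat.gcd_mul_left, Nat.gcd_comm, hco, mul_one]
        have e2 : Nat.gcd (d' * n') (d' * m') = d' := by
          rw [Nat.gcd_mul_left, Nat.gcd_comm, hco', mul_one]
        rw [← e1, h1', h2', e2]
      subst hdd
      have hn2 : n = n' := Nat.eq_of_mul_eq_mul_left hd h1'
      have hm2 : m = m' := Nat.eq_of_mul_eq_mul_left hd h2'
      apply Subtype.ext
      subst hn2; subst hm2; rfl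
    · rintro ⟨a, b⟩ hab
      simp only [Function.mem_support, ne_eq] at hab
      have ha : a ≠ 0 := by
        rintro rfl; exact hab (by rw [Nat.cast_zero, zero_cpow hrne, zero_mul])
      have hb : b ≠ 0 := by
        rintro rfl; exact hab (by rw [Nat.cast_zero, zero_cpow hsne, mul_zero])
      set d := Nat.gcd a b with hd
      have hdpos : 0 < d := Nat.gcd_pos_of_pos_left b (Nat.pos_of_ne_zero ha)
      have hda : d ∣ a := Nat.gcd_dvd_left a b
      have hdb : d ∣ b := Nat.gcd_dvd_right a b
      have hna : 0 < a / d := Nat.div_pos (Nat.le_of_dvd (Nat.pos_of_ne_zero ha) hda) hdpos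
      have hnb : 0 < b / d := Nat.div_pos (Nat.le_of_dvd (Nat.pos_of_ne_zero hb) hdb) hdpos
      have hcop : Nat.gcd (b / d) (a / d) = 1 := by
        rw [Nat.gcd_comm]
        exact Nat.coprime_div_gcd_div_gcd hdpos
      have hmem : (d, a / d, b / d) ∈ Function.support H := by
        show H (d, a / d, b / d) ≠ 0
        simp only [hH, hf]
        rw [if_pos (show 0 < a / d ∧ 0 < b / d ∧ Nat.gcd (b / d) (a / d) = 1 from
          ⟨hna, hnb, hcop⟩)]
        exact mul_ne_zero (hne d _ hdpos.ne')
          (mul_ne_zero (hne _ _ hna.ne') (hne _ _ hnb.ne'))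
      refine Set.mem_range.mpr ⟨⟨(d, a / d, b / d), hmem⟩, ?_⟩
      simp only [Prod.mk.injEq]
      exact ⟨Nat.mul_div_cancel' hda, Nat.mul_div_cancel' hdb⟩
    · rintro ⟨⟨d, n, m⟩, hq⟩
      obtain ⟨hd, hn, hm, hco⟩ := hsupp _ hq
      have hdC : (d : ℂ) ≠ 0 := by exact_mod_cast hd.ne'
      simp only [hH, hf]
      have e1 : ((d * n : ℕ) : ℂ) ^ (-r) = (d : ℂ) ^ (-r) * (n : ℂ) ^ (-r) := by
        push_cast
        exact natCast_mul_natCast_cpow d n (-r)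
      have e2 : ((d * m : ℕ) : ℂ) ^ (-s) = (d : ℂ) ^ (-s) * (m : ℂ) ^ (-s) := by
        push_cast
        exact natCast_mul_natCast_cpow d m (-s)
      have e3 : (d : ℂ) ^ (-(r + s)) = (d : ℂ) ^ (-r) * (d : ℂ) ^ (-s) := by
        rw [neg_add, cpow_add _ _ hdC]
      rw [e1, e2, e3, if_pos (show 0 < n ∧ 0 < m ∧ Nat.gcd m n = 1 from ⟨hn, hm, hco⟩)]
      ring
  have hz : riemannZeta (r + s) ≠ 0 := riemannZeta_ne_zero_of_one_lt_re hrs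
  have key : riemannZeta r * riemannZeta s = riemannZeta (r + s) * ∑' p, f p := by
    rw [← hfull, hbij, hHsum]
  rw [eq_div_iff hz]
  rw [key]; ring
end

section
/- Let a > 0 be real, let d and n be positive integers, and let s be a complex number with Re(s) > a + 1. Then Σ over positive integers k with k ≡ n (mod d) of σ_a(k)·k^{−s} converges absolutely and equals d^{a−2s} · Σ over pairs (e₁, e₂) with 1 ≤ e₁, e₂ ≤ d and e₁e₂ ≡ n (mod d) of ζ(s−a, e₁/d)·ζ(s, e₂/d). -/
open Finset

/-- `σ_a(n) = ∑_{d ∣ n} d^a` for real `a`. -/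
noncomputable def sigmaR (a : ℝ) (n : ℕ) : ℝ := ∑ d ∈ n.divisors, (d : ℝ) ^ a

/-- The Hurwitz zeta function `ζ(s, x)` for `x ∈ (0, 1]` (analytic continuation of
`∑_{n ≥ 0} (n + x)^{-s}`); note that `ζ(s, 1) = ζ(s)`. -/
noncomputable def hzeta (s : ℂ) (x : ℝ) : ℂ := HurwitzZeta.hurwitzZeta (x : UnitAddCircle) s

noncomputable def rp (d e : ℕ) (b : ℝ) (m : ℕ) : ℂ :=
  if m ≡ e [MOD d] then (m : ℂ) ^ (b : ℂ) else 0

lemma rp_summable {d e : ℕ} (b : ℝ) {s : ℂ} (hs : b + 1 < s.re) :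
    LSeriesSummable (rp d e b) s := by
  refine LSeriesSummable_of_le_const_mul_rpow (x := b + 1) hs ⟨1, fun m hm => ?_⟩
  rw [one_mul, add_sub_cancel_right]
  unfold rp
  split_ifs
  · rw [Complex.norm_natCast_cpow_of_pos (Nat.pos_of_ne_zero hm)]
    simp
  · simpa using Real.rpow_nonneg (Nat.cast_nonneg m) b

lemma exists_rep {d e m : ℕ} (hd : 0 < d) (he1 : 1 ≤ e) (he2 : e ≤ d) (hm : m ≠ 0)
    (h : m ≡ e [MOD d]) : ∃ j : ℕ, m = d * j + e := by
  obtain ⟨c, hc⟩ := (Nat.modEq_iff_dvd.mp h)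
  have hd' : (0:ℤ) < d := by exact_mod_cast hd
  have he1' : (1:ℤ) ≤ e := by exact_mod_cast he1
  have he2' : (e:ℤ) ≤ d := by exact_mod_cast he2
  have hm' : (1:ℤ) ≤ m := by exact_mod_cast Nat.one_le_iff_ne_zero.mpr hm
  have hc0 : c ≤ 0 := by
    by_contra hcpos
    push_neg at hcpos
    have : (d:ℤ) * 1 ≤ d * c := by
      exact mul_le_mul_of_nonneg_left (by linarith) (le_of_lt hd')
    linarith
  refine ⟨(-c).toNat, ?_⟩
  have : ((-c).toNat : ℤ) = -c := Int.toNat_of_nonneg (by linarith)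
  zify
  rw [this]
  linarith

lemma rp_lseries {d e : ℕ} (hd : 0 < d) (he1 : 1 ≤ e) (he2 : e ≤ d) (b : ℝ) {s : ℂ}
    (hs : b + 1 < s.re) :
    LSeries (rp d e b) s = (d : ℂ) ^ ((b : ℂ) - s) * hzeta (s - (b : ℂ)) ((e : ℝ) / d) := by
  have hd0 : (0:ℝ) < d := by exact_mod_cast hd
  have key : ∀ j : ℕ, LSeries.term (rp d e b) s (d * j + e)
      = (d : ℂ) ^ ((b : ℂ) - s) * (((j : ℝ) + (e : ℝ) / d : ℝ) : ℂ) ^ ((b : ℂ) - s) := by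
    intro j
    have hne : d * j + e ≠ 0 := by omega
    have hcong : d * j + e ≡ e [MOD d] := by
      show (d * j + e) % d = e % d
      exact Nat.mul_add_mod d j e
    rw [LSeries.term_of_ne_zero hne, rp, if_pos hcong]
    have hnz : ((d * j + e : ℕ) : ℂ) ≠ 0 := by exact_mod_cast hne
    rw [← Complex.cpow_sub _ _ hnz]
    have hr : (d:ℝ) * ((j:ℝ) + (e:ℝ)/d) = (d:ℝ)*(j:ℝ) + (e:ℝ) := by
      rw [mul_add, mul_comm (d:ℝ) ((e:ℝ)/d), div_mul_cancel₀ _ (ne_of_gt hd0)]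
    have hcast : ((d * j + e : ℕ) : ℂ) = ((((d:ℝ) * ((j:ℝ) + (e:ℝ)/d)) : ℝ) : ℂ) := by
      rw [hr]; push_cast; ring
    have hnn : (0:ℝ) ≤ (j:ℝ) + (e:ℝ)/d := by positivity
    rw [hcast, Complex.ofReal_mul, Complex.mul_cpow_ofReal_nonneg hd0.le hnn]
    norm_cast
  have hrange : (1:ℝ) < (s - (b:ℂ)).re := by
    simp only [Complex.sub_re, Complex.ofReal_re]
    linarith
  have hmem : (e : ℝ) / d ∈ Set.Icc (0:ℝ) 1 := by
    constructor
    · positivity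
    · rw [div_le_one hd0]; exact_mod_cast he2
  have hzsum := HurwitzZeta.hasSum_hurwitzZeta_of_one_lt_re hmem hrange
  have hzsum' : HasSum (fun j : ℕ => (((j : ℝ) + (e : ℝ) / d : ℝ) : ℂ) ^ ((b : ℂ) - s))
      (hzeta (s - (b : ℂ)) ((e : ℝ) / d)) := by
    refine hzsum.congr_fun fun j => ?_
    push_cast
    rw [show (b : ℂ) - s = -(s - b) by ring, Complex.cpow_neg, one_div]
  have hsum : (∑' m : ℕ, LSeries.term (rp d e b) s m)
      = ∑' j : ℕ, LSeries.term (rp d e b) s (d * j + e) := by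
    refine tsum_eq_tsum_of_ne_zero_bij (fun j => d * (j : ℕ) + e) ?_ ?_ ?_
    · intro x y hxy
      have h1 : d * (x:ℕ) + e = d * (y:ℕ) + e := hxy
      have h2 : (x:ℕ) = (y:ℕ) := Nat.eq_of_mul_eq_mul_left hd (by omega)
      exact Subtype.ext h2
    · intro m hm
      simp only [Function.mem_support] at hm
      have hm0 : m ≠ 0 := by
        intro h0; rw [h0] at hm; exact hm (LSeries.term_zero _ _)
      have hcong : m ≡ e [MOD d] := by
        by_contra hc
        rw [LSeries.term_of_ne_zero hm0, rp, if_neg hc] at hm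
        simp at hm
      obtain ⟨j, hj⟩ := exists_rep hd he1 he2 hm0 hcong
      exact ⟨⟨j, by simpa only [Function.mem_support, ← hj] using hm⟩, hj.symm⟩
    · intro x; rfl
  calc LSeries (rp d e b) s
      = ∑' m : ℕ, LSeries.term (rp d e b) s m := rfl
    _ = ∑' j : ℕ, LSeries.term (rp d e b) s (d * j + e) := hsum
    _ = ∑' j : ℕ, (d : ℂ) ^ ((b : ℂ) - s) * (((j : ℝ) + (e : ℝ) / d : ℝ) : ℂ) ^ ((b : ℂ) - s) :=
        tsum_congr key
    _ = (d : ℂ) ^ ((b : ℂ) - s) * hzeta (s - (b : ℂ)) ((e : ℝ) / d) := by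
        rw [tsum_mul_left, hzsum'.tsum_eq]

lemma res_spec {d : ℕ} (hd : 0 < d) {m : ℕ} (hm : m ≠ 0) :
    ((m - 1) % d + 1) ∈ Finset.Icc 1 d ∧ m ≡ (m - 1) % d + 1 [MOD d] := by
  have hlt : (m - 1) % d < d := Nat.mod_lt _ hd
  have hdm := Nat.div_add_mod (m - 1) d
  have hme : m = d * ((m - 1) / d) + ((m - 1) % d + 1) := by omega
  refine ⟨Finset.mem_Icc.mpr ⟨by omega, by omega⟩, ?_⟩
  show m % d = ((m - 1) % d + 1) % d
  conv_lhs => rw [hme]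
  exact Nat.mul_add_mod _ _ _

lemma res_eq {d e m : ℕ} (hd : 0 < d) (he : e ∈ Finset.Icc 1 d) (hm : m ≠ 0)
    (h : m ≡ e [MOD d]) : e = (m - 1) % d + 1 := by
  rw [Finset.mem_Icc] at he
  obtain ⟨j, hj⟩ := exists_rep hd he.1 he.2 hm h
  subst hj
  have h1 : d * j + e - 1 = d * j + (e - 1) := by omega
  rw [h1, Nat.mul_add_mod, Nat.mod_eq_of_lt (by omega)]
  omega

lemma count_lemma {d n m l : ℕ} (hd : 0 < d) (hm : m ≠ 0) (hl : l ≠ 0) (c : ℂ) :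
    ∑ e ∈ (Finset.Icc 1 d ×ˢ Finset.Icc 1 d).filter (fun e : ℕ × ℕ => e.1 * e.2 ≡ n [MOD d]),
      (if m ≡ e.1 [MOD d] ∧ l ≡ e.2 [MOD d] then c else 0)
    = if m * l ≡ n [MOD d] then c else 0 := by
  obtain ⟨hrm_mem, hrm⟩ := res_spec hd hm
  obtain ⟨hrl_mem, hrl⟩ := res_spec hd hl
  by_cases hk : m * l ≡ n [MOD d]
  · rw [if_pos hk]
    rw [Finset.sum_eq_single_of_mem ((m - 1) % d + 1, (l - 1) % d + 1) ?_ ?_]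
    · rw [if_pos ⟨hrm, hrl⟩]
    · refine Finset.mem_filter.mpr ⟨Finset.mem_product.mpr ⟨hrm_mem, hrl_mem⟩, ?_⟩
      exact (hrm.symm.mul hrl.symm).trans hk
    · intro e he hne
      rw [if_neg]
      rintro ⟨h1, h2⟩
      apply hne
      have hmem := Finset.mem_product.mp (Finset.mem_filter.mp he).1
      exact Prod.ext (res_eq hd hmem.1 hm h1) (res_eq hd hmem.2 hl h2)
  · rw [if_neg hk]
    refine Finset.sum_eq_zero fun e he => ?_
    rw [if_neg]
    rintro ⟨h1, h2⟩
    exact hk ((h1.mul h2).trans (Finset.mem_filter.mp he).2)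

lemma key_pointwise (a : ℝ) {d : ℕ} (n : ℕ) (hd : 0 < d) (s : ℂ) (k : ℕ) :
    (if 0 < k ∧ k ≡ n [MOD d] then (sigmaR a k : ℂ) * (k : ℂ) ^ (-s) else 0)
    = ∑ e ∈ (Finset.Icc 1 d ×ˢ Finset.Icc 1 d).filter (fun e : ℕ × ℕ => e.1 * e.2 ≡ n [MOD d]),
        LSeries.term (LSeries.convolution (rp d e.1 a) (rp d e.2 0)) s k := by
  rcases eq_or_ne k 0 with rfl | hk
  · simp [LSeries.term_zero]
  · have hprod : ∀ (e : ℕ × ℕ) (m l : ℕ),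
        rp d e.1 a m * rp d e.2 0 l
        = if m ≡ e.1 [MOD d] ∧ l ≡ e.2 [MOD d] then (m : ℂ) ^ (a : ℂ) else 0 := by
      intro e m l
      unfold rp
      by_cases h1 : m ≡ e.1 [MOD d] <;> by_cases h2 : l ≡ e.2 [MOD d] <;>
        simp [h1, h2, Complex.cpow_zero]
    calc (if 0 < k ∧ k ≡ n [MOD d] then (sigmaR a k : ℂ) * (k : ℂ) ^ (-s) else 0)
        = (if k ≡ n [MOD d] then (sigmaR a k : ℂ) else 0) / (k : ℂ) ^ s := by
          rw [Complex.cpow_neg]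
          by_cases h : k ≡ n [MOD d]
          · rw [if_pos ⟨Nat.pos_of_ne_zero hk, h⟩, if_pos h, div_eq_mul_inv]
          · rw [if_neg (fun hc => h hc.2), if_neg h, zero_div]
      _ = (∑ p ∈ k.divisorsAntidiagonal,
            if k ≡ n [MOD d] then (p.1 : ℂ) ^ (a : ℂ) else 0) / (k : ℂ) ^ s := by
          congr 1
          by_cases h : k ≡ n [MOD d]
          · simp only [if_pos h]
            rw [Nat.sum_divisorsAntidiagonal (f := fun m _ => (m : ℂ) ^ (a : ℂ))]
            rw [sigmaR]
            push_cast
            refine Finset.sum_congr rfl fun i hi => ?_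
            exact Complex.ofReal_cpow (Nat.cast_nonneg i) a
          · simp [h]
      _ = (∑ p ∈ k.divisorsAntidiagonal,
            ∑ e ∈ (Finset.Icc 1 d ×ˢ Finset.Icc 1 d).filter
              (fun e : ℕ × ℕ => e.1 * e.2 ≡ n [MOD d]),
              (if p.1 ≡ e.1 [MOD d] ∧ p.2 ≡ e.2 [MOD d] then (p.1 : ℂ) ^ (a : ℂ) else 0))
            / (k : ℂ) ^ s := by
          congr 1
          refine Finset.sum_congr rfl fun p hp => ?_
          obtain ⟨hpk, -⟩ := Nat.mem_divisorsAntidiagonal.mp hp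
          have hm : p.1 ≠ 0 := fun h0 => hk (by rw [← hpk, h0, zero_mul])
          have hl : p.2 ≠ 0 := fun h0 => hk (by rw [← hpk, h0, mul_zero])
          rw [count_lemma hd hm hl, hpk]
      _ = ∑ e ∈ (Finset.Icc 1 d ×ˢ Finset.Icc 1 d).filter
              (fun e : ℕ × ℕ => e.1 * e.2 ≡ n [MOD d]),
            LSeries.term (LSeries.convolution (rp d e.1 a) (rp d e.2 0)) s k := by
          rw [Finset.sum_comm, Finset.sum_div]
          refine Finset.sum_congr rfl fun e he => ?_
          rw [LSeries.term_of_ne_zero hk, LSeries.convolution_def]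
          congr 1
          exact Finset.sum_congr rfl fun p hp => (hprod e p.1 p.2).symm

theorem stmt7 (a : ℝ) (ha : 0 < a) (d n : ℕ) (hd : 0 < d) (hn : 0 < n)
    (s : ℂ) (hs : a + 1 < s.re) :
    Summable (fun k : ℕ =>
      ‖if 0 < k ∧ k ≡ n [MOD d] then (sigmaR a k : ℂ) * (k : ℂ) ^ (-s) else 0‖) ∧
    (∑' k : ℕ, if 0 < k ∧ k ≡ n [MOD d] then (sigmaR a k : ℂ) * (k : ℂ) ^ (-s) else 0)
      = (d : ℂ) ^ ((a : ℂ) - 2 * s) *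
          ∑ e ∈ (Finset.Icc 1 d ×ˢ Finset.Icc 1 d).filter
              (fun e : ℕ × ℕ => e.1 * e.2 ≡ n [MOD d]),
            hzeta (s - (a : ℂ)) ((e.1 : ℝ) / d) * hzeta s ((e.2 : ℝ) / d) := by
  have hs0 : (0:ℝ) + 1 < s.re := by linarith
  have hf : ∀ e : ℕ × ℕ,
      LSeriesSummable (LSeries.convolution (rp d e.1 a) (rp d e.2 0)) s :=
    fun e => (rp_summable a hs).convolution (rp_summable 0 hs0)
  have hkey := key_pointwise a n hd s
  have hd0 : (d : ℂ) ≠ 0 := by exact_mod_cast hd.ne'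
  constructor
  · have hbig : Summable (fun k : ℕ =>
        ∑ e ∈ (Finset.Icc 1 d ×ˢ Finset.Icc 1 d).filter
            (fun e : ℕ × ℕ => e.1 * e.2 ≡ n [MOD d]),
          ‖LSeries.term (LSeries.convolution (rp d e.1 a) (rp d e.2 0)) s k‖) :=
      summable_sum fun e _ => summable_norm_iff.mpr (hf e)
    refine hbig.of_nonneg_of_le (fun k => norm_nonneg _) fun k => ?_
    rw [hkey k]
    exact norm_sum_le _ _
  · calc (∑' k : ℕ, if 0 < k ∧ k ≡ n [MOD d] then (sigmaR a k : ℂ) * (k : ℂ) ^ (-s) else 0)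
        = ∑' k : ℕ, ∑ e ∈ (Finset.Icc 1 d ×ˢ Finset.Icc 1 d).filter
              (fun e : ℕ × ℕ => e.1 * e.2 ≡ n [MOD d]),
            LSeries.term (LSeries.convolution (rp d e.1 a) (rp d e.2 0)) s k :=
          tsum_congr hkey
      _ = ∑ e ∈ (Finset.Icc 1 d ×ˢ Finset.Icc 1 d).filter
              (fun e : ℕ × ℕ => e.1 * e.2 ≡ n [MOD d]),
            ∑' k : ℕ, LSeries.term (LSeries.convolution (rp d e.1 a) (rp d e.2 0)) s k :=
          Summable.tsum_finsetSum fun e _ => hf e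
      _ = ∑ e ∈ (Finset.Icc 1 d ×ˢ Finset.Icc 1 d).filter
              (fun e : ℕ × ℕ => e.1 * e.2 ≡ n [MOD d]),
            (d : ℂ) ^ ((a : ℂ) - 2 * s) *
              (hzeta (s - (a : ℂ)) ((e.1 : ℝ) / d) * hzeta s ((e.2 : ℝ) / d)) := by
          refine Finset.sum_congr rfl fun e he => ?_
          have hmem := Finset.mem_product.mp (Finset.mem_filter.mp he).1
          have h1 := Finset.mem_Icc.mp hmem.1
          have h2 := Finset.mem_Icc.mp hmem.2
          have hLs : (∑' k : ℕ, LSeries.term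
              (LSeries.convolution (rp d e.1 a) (rp d e.2 0)) s k)
              = LSeries (rp d e.1 a) s * LSeries (rp d e.2 0) s :=
            LSeries_convolution' (rp_summable a hs) (rp_summable 0 hs0)
          rw [hLs, rp_lseries hd h1.1 h1.2 a hs, rp_lseries hd h2.1 h2.2 0 hs0]
          simp only [Complex.ofReal_zero, sub_zero, zero_sub]
          rw [mul_mul_mul_comm, ← Complex.cpow_add _ _ hd0,
            show (a : ℂ) - s + -s = (a : ℂ) - 2 * s by ring]
      _ = (d : ℂ) ^ ((a : ℂ) - 2 * s) *
          ∑ e ∈ (Finset.Icc 1 d ×ˢ Finset.Icc 1 d).filter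
              (fun e : ℕ × ℕ => e.1 * e.2 ≡ n [MOD d]),
            hzeta (s - (a : ℂ)) ((e.1 : ℝ) / d) * hzeta s ((e.2 : ℝ) / d) := by
          rw [← Finset.mul_sum]
end

section
/- Let d be a positive integer and let m, k, n be integers. Then S_n(m, k; d) = Σ over positive integers f dividing gcd(d, n, k) of f · K(m, k·n/f²; d/f). -/
open Finset

/-- `e(x) = exp(2πix)`. -/
noncomputable def eexp (x : ℝ) : ℂ := Complex.exp (2 * Real.pi * Complex.I * x)

/-- The exponential sum `S_n(m, k; d)`: sum over residues `e₁ e₂ ≡ n (mod d)` of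
`e((m e₁ + k e₂)/d)`. -/
noncomputable def expSum (n m k : ℤ) (d : ℕ) : ℂ :=
  ∑ e ∈ (Finset.range d ×ˢ Finset.range d).filter
      (fun e : ℕ × ℕ => (e.1 * e.2 : ℤ) ≡ n [ZMOD (d : ℤ)]),
    eexp ((m * e.1 + k * e.2) / d)

/-- The Kloosterman sum `K(a, b; q)`. -/
noncomputable def kloosterman (a b : ℤ) (q : ℕ) : ℂ :=
  ∑ p ∈ (Finset.range q ×ˢ Finset.range q).filter
      (fun p : ℕ × ℕ => (p.1 * p.2 : ℤ) ≡ 1 [ZMOD (q : ℤ)]),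
    eexp ((a * p.1 + b * p.2) / q)

lemma eexp_add (x y : ℝ) : eexp (x + y) = eexp x * eexp y := by
  simp only [eexp, ← Complex.exp_add]
  congr 1
  push_cast
  ring

lemma eexp_intCast (t : ℤ) : eexp t = 1 := by
  unfold eexp
  rw [show (2 * (Real.pi:ℂ) * Complex.I * ((t:ℝ):ℂ)) = (t:ℤ) * (2 * Real.pi * Complex.I) by
    push_cast; ring]
  exact Complex.exp_int_mul_two_pi_mul_I t

lemma eexp_eq_one_iff (x : ℝ) : eexp x = 1 ↔ ∃ t : ℤ, x = t := by
  rw [eexp, Complex.exp_eq_one_iff]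
  constructor
  · rintro ⟨t, ht⟩
    refine ⟨t, ?_⟩
    have h2 : (2 * (Real.pi:ℂ) * Complex.I) ≠ 0 := by
      refine mul_ne_zero (mul_ne_zero two_ne_zero ?_) Complex.I_ne_zero
      exact_mod_cast Real.pi_ne_zero
    have : (x:ℂ) = t := by
      exact mul_left_cancel₀ h2 (by linear_combination ht)
    exact_mod_cast this
  · rintro ⟨t, rfl⟩
    exact ⟨t, by push_cast; ring⟩

lemma eexp_congr {q : ℕ} (hq : 0 < q) {A B : ℤ} (h : A ≡ B [ZMOD (q:ℤ)]) :
    eexp ((A:ℝ) / q) = eexp ((B:ℝ) / q) := by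
  obtain ⟨t, ht⟩ := h.dvd
  have hq0 : (q:ℝ) ≠ 0 := Nat.cast_ne_zero.mpr hq.ne'
  have : (B:ℝ) / q = (A:ℝ)/q + t := by
    field_simp
    have : (B:ℝ) - A = q * t := by exact_mod_cast congrArg Int.cast ht
    linarith
  rw [this, eexp_add, eexp_intCast, mul_one]

lemma eexp_nat_mul (x : ℝ) (j : ℕ) : eexp (j * x) = eexp x ^ j := by
  induction j with
  | zero => simpa using eexp_intCast 0
  | succ i ih =>
      rw [pow_succ, ← ih, ← eexp_add]
      congr 1
      push_cast
      ring

lemma sum_eexp_geom (f : ℕ) (hf : 0 < f) (k : ℤ) :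
    ∑ j ∈ Finset.range f, eexp ((k * j : ℝ)/f) = if (f:ℤ) ∣ k then (f:ℂ) else 0 := by
  have hf0 : (f:ℝ) ≠ 0 := Nat.cast_ne_zero.mpr hf.ne'
  have key : ∀ j : ℕ, eexp ((k * j : ℝ)/f) = eexp ((k:ℝ)/f) ^ j := by
    intro j
    rw [← eexp_nat_mul]
    congr 1
    field_simp
  simp only [key]
  by_cases h : (f:ℤ) ∣ k
  · obtain ⟨c, rfl⟩ := h
    have : ((f * c : ℤ):ℝ)/f = (c:ℤ) := by push_cast; field_simp
    rw [this, eexp_intCast]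
    simp
  · rw [if_neg h]
    have hz : eexp ((k:ℝ)/f) ≠ 1 := by
      rw [Ne, eexp_eq_one_iff]
      rintro ⟨t, ht⟩
      apply h
      refine ⟨t, ?_⟩
      have : (k:ℝ) = f * t := by field_simp at ht; linarith
      exact_mod_cast this
    rw [geom_sum_eq hz]
    have : eexp ((k:ℝ)/f) ^ f = 1 := by
      rw [← eexp_nat_mul]
      have : (f:ℝ) * ((k:ℝ)/f) = (k:ℤ) := by field_simp
      rw [this, eexp_intCast]
    simp [this]

lemma modEq_zmod_iff (q : ℕ) (A B : ℤ) : A ≡ B [ZMOD (q:ℤ)] ↔ ((A : ZMod q) = (B : ZMod q)) :=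
  (ZMod.intCast_eq_intCast_iff A B q).symm

lemma sum_inv_pairs (q : ℕ) (hq : 0 < q) (a b n' : ℤ) :
    ∑ p ∈ (Finset.range q ×ˢ Finset.range q).filter
        (fun p : ℕ × ℕ => Nat.gcd p.1 q = 1 ∧ (p.1 * p.2 : ℤ) ≡ n' [ZMOD (q:ℤ)]),
      eexp ((a * p.1 + b * p.2) / q) = kloosterman a (b * n') q := by
  haveI : NeZero q := ⟨hq.ne'⟩
  unfold kloosterman
  refine Finset.sum_nbij' (fun p => (p.1, ((p.1 : ZMod q)⁻¹).val))
    (fun p => (p.1, ((n' : ZMod q) * ((p.2 : ℕ) : ZMod q)).val)) ?_ ?_ ?_ ?_ ?_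
  · rintro ⟨u, v⟩ hp
    simp only [Finset.mem_filter, Finset.mem_product, Finset.mem_range] at hp ⊢
    obtain ⟨⟨hu, hv⟩, hcop, hmod⟩ := hp
    have hunit : IsUnit ((u : ℕ) : ZMod q) := (ZMod.isUnit_iff_coprime u q).mpr hcop
    refine ⟨⟨hu, ZMod.val_lt _⟩, ?_⟩
    rw [modEq_zmod_iff]
    push_cast
    rw [ZMod.natCast_val, ZMod.cast_id]
    rw [ZMod.mul_inv_of_unit _ hunit]
  · rintro ⟨x, y⟩ hp
    simp only [Finset.mem_filter, Finset.mem_product, Finset.mem_range] at hp ⊢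
    obtain ⟨⟨hx, hy⟩, hmod⟩ := hp
    rw [modEq_zmod_iff] at hmod
    push_cast at hmod
    have hunit : IsUnit ((x : ℕ) : ZMod q) := IsUnit.of_mul_eq_one _ hmod
    refine ⟨⟨hx, ZMod.val_lt _⟩, (ZMod.isUnit_iff_coprime x q).mp hunit, ?_⟩
    rw [modEq_zmod_iff]
    push_cast
    rw [ZMod.natCast_val, ZMod.cast_id]
    calc ((x:ℕ) : ZMod q) * ((n' : ZMod q) * (y : ℕ)) = (n' : ZMod q) * ((x:ℕ) * (y:ℕ)) := by ring
    _ = (n' : ZMod q) := by rw [hmod, mul_one]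
  · rintro ⟨u, v⟩ hp
    simp only [Finset.mem_filter, Finset.mem_product, Finset.mem_range] at hp
    obtain ⟨⟨hu, hv⟩, hcop, hmod⟩ := hp
    have hunit : IsUnit ((u : ℕ) : ZMod q) := (ZMod.isUnit_iff_coprime u q).mpr hcop
    rw [modEq_zmod_iff] at hmod
    push_cast at hmod
    refine Prod.ext rfl ?_
    show ((n' : ZMod q) * (((((u:ℕ) : ZMod q)⁻¹).val : ℕ) : ZMod q)).val = v
    rw [ZMod.natCast_val, ZMod.cast_id]
    have hv' : (n' : ZMod q) * ((u:ℕ) : ZMod q)⁻¹ = ((v:ℕ) : ZMod q) := by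
      rw [← hmod, mul_comm ((u:ℕ):ZMod q), mul_assoc, ZMod.mul_inv_of_unit _ hunit, mul_one]
    rw [hv', ZMod.val_cast_of_lt hv]
  · rintro ⟨x, y⟩ hp
    simp only [Finset.mem_filter, Finset.mem_product, Finset.mem_range] at hp
    obtain ⟨⟨hx, hy⟩, hmod⟩ := hp
    rw [modEq_zmod_iff] at hmod
    push_cast at hmod
    refine Prod.ext rfl ?_
    show (((x:ℕ) : ZMod q)⁻¹).val = y
    rw [ZMod.inv_eq_of_mul_eq_one _ _ _ hmod, ZMod.val_cast_of_lt hy]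
  · rintro ⟨u, v⟩ hp
    simp only [Finset.mem_filter, Finset.mem_product, Finset.mem_range] at hp
    obtain ⟨⟨hu, hv⟩, hcop, hmod⟩ := hp
    have hunit : IsUnit ((u : ℕ) : ZMod q) := (ZMod.isUnit_iff_coprime u q).mpr hcop
    rw [modEq_zmod_iff] at hmod
    push_cast at hmod
    simp only
    set y := ((u : ℕ) : ZMod q)⁻¹.val with hy
    have h1 : ((a:ℝ) * (u:ℝ) + (b:ℝ) * (v:ℝ)) = (((a * u + b * v : ℤ)) : ℝ) := by
      push_cast; ring
    have h2 : ((a:ℝ) * (u:ℝ) + ((b * n' : ℤ):ℝ) * (y:ℝ)) = (((a * u + b * n' * y : ℤ)) : ℝ) := by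
      push_cast; ring
    rw [h1, h2]
    apply eexp_congr hq
    rw [modEq_zmod_iff]
    push_cast
    rw [ZMod.natCast_val, ZMod.cast_id]
    have hv' : ((v:ℕ) : ZMod q) = (n' : ZMod q) * ((u:ℕ) : ZMod q)⁻¹ := by
      rw [← hmod, mul_comm ((u:ℕ):ZMod q), mul_assoc, ZMod.mul_inv_of_unit _ hunit, mul_one]
    rw [hv']
    ring

lemma expSum_inner_aux (d : ℕ) (hd : 0 < d) (m k n : ℤ) (f : ℕ) (hf : 0 < f) (hfd : f ∣ d)
    (hfn : (f:ℤ) ∣ n) :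
    ∑ e ∈ ((Finset.range d ×ˢ Finset.range d).filter
        (fun e : ℕ × ℕ => (e.1 * e.2 : ℤ) ≡ n [ZMOD (d:ℤ)])).filter
        (fun e : ℕ × ℕ => Nat.gcd e.1 d = f),
      eexp ((m * e.1 + k * e.2) / d)
    = if (f:ℤ) ∣ k then (f:ℂ) * kloosterman m (k * n / (f:ℤ)^2) (d/f) else 0 := by
  set q := d / f with hqdef
  have hdq : d = f * q := (Nat.mul_div_cancel' hfd).symm
  have hq : 0 < q := Nat.div_pos (Nat.le_of_dvd hd hfd) hf
  obtain ⟨n', rfl⟩ := hfn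
  have hfR : (f:ℝ) ≠ 0 := Nat.cast_ne_zero.mpr hf.ne'
  have hqR : (q:ℝ) ≠ 0 := Nat.cast_ne_zero.mpr hq.ne'
  have hfZ : (f:ℤ) ≠ 0 := Int.natCast_ne_zero.mpr hf.ne'
  have hdR : (d:ℝ) = (f:ℝ) * q := by exact_mod_cast congrArg (Nat.cast : ℕ → ℝ) hdq
  have hdZ : (d:ℤ) = (f:ℤ) * q := by exact_mod_cast congrArg (Nat.cast : ℕ → ℤ) hdq
  have step1 :
      ∑ e ∈ ((Finset.range d ×ˢ Finset.range d).filter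
          (fun e : ℕ × ℕ => (e.1 * e.2 : ℤ) ≡ (f:ℤ) * n' [ZMOD (d:ℤ)])).filter
          (fun e : ℕ × ℕ => Nat.gcd e.1 d = f),
        eexp ((m * e.1 + k * e.2) / d)
      = ∑ x ∈ ((Finset.range q ×ˢ Finset.range q).filter
            (fun p : ℕ × ℕ => Nat.gcd p.1 q = 1 ∧ (p.1 * p.2 : ℤ) ≡ n' [ZMOD (q:ℤ)])) ×ˢ
            Finset.range f,
          eexp ((m * ((f:ℝ) * x.1.1) + k * x.1.2) / d) * eexp (((k:ℝ) * x.2) / f) := by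
    refine Finset.sum_nbij' (fun e => ((e.1 / f, e.2 % q), e.2 / q))
      (fun x => (f * x.1.1, x.1.2 + x.2 * q)) ?_ ?_ ?_ ?_ ?_
    · rintro ⟨a, b⟩ he
      simp only [Finset.mem_filter, Finset.mem_product, Finset.mem_range] at he ⊢
      obtain ⟨⟨⟨ha, hb⟩, hmod⟩, hg⟩ := he
      have hfa : f ∣ a := hg ▸ Nat.gcd_dvd_left a d
      obtain ⟨u, rfl⟩ := hfa
      rw [Nat.mul_div_cancel_left u hf]
      have hu : u < q := by
        by_contra hcon
        push_neg at hcon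
        have : f * q ≤ f * u := Nat.mul_le_mul_left f hcon
        omega
      have hgcd : Nat.gcd u q = 1 := by
        rw [hdq, Nat.gcd_mul_left] at hg
        exact Nat.eq_of_mul_eq_mul_left hf (hg.trans (mul_one f).symm)
      refine ⟨⟨⟨hu, Nat.mod_lt _ hq⟩, hgcd, ?_⟩, (Nat.div_lt_iff_lt_mul hq).mpr (by omega)⟩
      have hbb : (q:ℤ) * (b/q : ℕ) + ((b % q : ℕ):ℤ) = (b:ℤ) := by
        exact_mod_cast Nat.div_add_mod b q
      obtain ⟨c, hc⟩ := hmod.dvd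
      rw [hdZ] at hc
      rw [Int.modEq_iff_dvd]
      refine ⟨c + u * (b/q : ℕ), ?_⟩
      refine mul_left_cancel₀ hfZ ?_
      push_cast at hc hbb ⊢
      linear_combination hc - (f:ℤ) * (u:ℤ) * hbb
    · rintro ⟨⟨u, v⟩, j⟩ hx
      simp only [Finset.mem_filter, Finset.mem_product, Finset.mem_range] at hx ⊢
      obtain ⟨⟨⟨hu, hv⟩, hgcd, hmod⟩, hj⟩ := hx
      have h1 : v + j * q < (j+1) * q := by rw [add_mul, one_mul]; omega
      have h2 : (j+1) * q ≤ f * q := Nat.mul_le_mul_right q (by omega)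
      refine ⟨⟨⟨by rw [hdq]; exact mul_lt_mul_of_pos_left hu (by exact_mod_cast hf), ?_⟩, ?_⟩, ?_⟩
      · rw [hdq]; exact lt_of_lt_of_le h1 h2
      · obtain ⟨c, hc⟩ := hmod.dvd
        rw [Int.modEq_iff_dvd, hdZ]
        refine ⟨c - u * j, ?_⟩
        push_cast at hc
        push_cast
        linear_combination (f:ℤ) * hc
      · rw [hdq, Nat.gcd_mul_left, hgcd, mul_one]
    · rintro ⟨a, b⟩ he
      simp only [Finset.mem_filter, Finset.mem_product, Finset.mem_range] at he
      obtain ⟨⟨⟨ha, hb⟩, hmod⟩, hg⟩ := he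
      have hfa : f ∣ a := hg ▸ Nat.gcd_dvd_left a d
      exact Prod.ext (Nat.mul_div_cancel' hfa) (Nat.mod_add_div' b q)
    · rintro ⟨⟨u, v⟩, j⟩ hx
      simp only [Finset.mem_filter, Finset.mem_product, Finset.mem_range] at hx
      obtain ⟨⟨⟨hu, hv⟩, hgcd, hmod⟩, hj⟩ := hx
      have e1 : f * u / f = u := Nat.mul_div_cancel_left u hf
      have e2 : (v + j * q) % q = v := by rw [Nat.add_mul_mod_self_right, Nat.mod_eq_of_lt hv]
      have e3 : (v + j * q) / q = j := by
        rw [Nat.add_mul_div_right v j hq, Nat.div_eq_of_lt hv, zero_add]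
      refine Prod.ext (Prod.ext ?_ ?_) ?_ <;> simp [e1, e2, e3]
    · rintro ⟨a, b⟩ he
      simp only [Finset.mem_filter, Finset.mem_product, Finset.mem_range] at he
      obtain ⟨⟨⟨ha, hb⟩, hmod⟩, hg⟩ := he
      have hfa : f ∣ a := hg ▸ Nat.gcd_dvd_left a d
      simp only
      rw [← eexp_add]
      congr 1
      have h1 : (a:ℝ) = (f:ℝ) * ((a/f : ℕ):ℝ) := by
        exact_mod_cast congrArg (Nat.cast : ℕ → ℝ) (Nat.mul_div_cancel' hfa).symm
      have h2 : (b:ℝ) = ((b % q : ℕ):ℝ) + ((b / q : ℕ):ℝ) * q := by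
        exact_mod_cast congrArg (Nat.cast : ℕ → ℝ) (Nat.mod_add_div' b q).symm
      rw [hdR]
      rw [h1, h2]
      field_simp
      ring
  rw [step1, Finset.sum_product]
  have step2 : ∀ p ∈ (Finset.range q ×ˢ Finset.range q).filter
      (fun p : ℕ × ℕ => Nat.gcd p.1 q = 1 ∧ (p.1 * p.2 : ℤ) ≡ n' [ZMOD (q:ℤ)]),
      ∑ j ∈ Finset.range f, eexp ((m * ((f:ℝ) * p.1) + k * p.2) / d) * eexp (((k:ℝ) * j) / f)
      = eexp ((m * ((f:ℝ) * p.1) + k * p.2) / d) * (if (f:ℤ) ∣ k then (f:ℂ) else 0) := by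
    intro p _
    rw [← Finset.mul_sum, sum_eexp_geom f hf k]
  rw [Finset.sum_congr rfl step2]
  by_cases hk : (f:ℤ) ∣ k
  · obtain ⟨k', rfl⟩ := hk
    simp only [if_pos (show ((f:ℕ):ℤ) ∣ (f:ℤ) * k' from ⟨k', rfl⟩)]
    have harg : ((f:ℤ) * k') * ((f:ℤ) * n') / (f:ℤ)^2 = k' * n' := by
      rw [show ((f:ℤ) * k') * ((f:ℤ) * n') = (f:ℤ)^2 * (k' * n') by ring,
        Int.mul_ediv_cancel_left _ (pow_ne_zero 2 hfZ)]
    rw [harg, ← sum_inv_pairs q hq m k' n', Finset.mul_sum]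
    apply Finset.sum_congr rfl
    intro p _
    rw [mul_comm]
    congr 2
    rw [hdR]
    push_cast
    field_simp
  · rw [if_neg hk]
    simp only [if_neg hk, mul_zero, Finset.sum_const_zero]

theorem stmt10 (d : ℕ) (hd : 0 < d) (m k n : ℤ) :
    expSum n m k d
      = ∑ f ∈ (Nat.gcd d (Int.gcd n k)).divisors,
          (f : ℂ) * kloosterman m (k * n / (f : ℤ) ^ 2) (d / f) := by
  have hg1 : Nat.gcd d n.natAbs ≠ 0 := Nat.gcd_ne_zero_left hd.ne'
  have key : expSum n m k d = ∑ f ∈ (Nat.gcd d n.natAbs).divisors,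
      (if (f:ℤ) ∣ k then (f:ℂ) * kloosterman m (k * n / (f:ℤ)^2) (d/f) else 0) := by
    unfold expSum
    rw [← Finset.sum_fiberwise_of_maps_to (g := fun e : ℕ × ℕ => Nat.gcd e.1 d)
      (t := (Nat.gcd d n.natAbs).divisors) ?_]
    · apply Finset.sum_congr rfl
      intro f hfmem
      obtain ⟨hfdvd, -⟩ := Nat.mem_divisors.mp hfmem
      have hf : 0 < f := Nat.pos_of_mem_divisors hfmem
      have hfd : f ∣ d := hfdvd.trans (Nat.gcd_dvd_left _ _)
      have hfn : (f:ℤ) ∣ n := by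
        have h1 : f ∣ n.natAbs := hfdvd.trans (Nat.gcd_dvd_right _ _)
        exact (Int.natCast_dvd_natCast.mpr h1).trans (Int.natAbs_dvd.mpr dvd_rfl)
      exact expSum_inner_aux d hd m k n f hf hfd hfn
    · rintro ⟨a, b⟩ he
      simp only [Finset.mem_filter, Finset.mem_product, Finset.mem_range] at he
      obtain ⟨⟨ha, hb⟩, hmod⟩ := he
      rw [Nat.mem_divisors]
      refine ⟨Nat.dvd_gcd (Nat.gcd_dvd_right a d) ?_, hg1⟩
      have h1 : ((Nat.gcd a d : ℕ):ℤ) ∣ n := by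
        obtain ⟨c, hc⟩ := hmod.dvd
        have hda : ((Nat.gcd a d : ℕ):ℤ) ∣ (a:ℤ) * b :=
          Dvd.dvd.mul_right (Int.natCast_dvd_natCast.mpr (Nat.gcd_dvd_left a d)) _
        have hdd : ((Nat.gcd a d : ℕ):ℤ) ∣ (d:ℤ) := Int.natCast_dvd_natCast.mpr (Nat.gcd_dvd_right a d)
        have : n = (a:ℤ) * b + (d:ℤ) * c := by push_cast at hc ⊢; linarith
        rw [this]
        exact dvd_add hda (hdd.mul_right c)
      have := Int.natAbs_dvd_natAbs.mpr h1
      simpa using this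
  rw [key]
  have hsub : (Nat.gcd d (Int.gcd n k)).divisors ⊆ (Nat.gcd d n.natAbs).divisors := by
    apply Nat.divisors_subset_of_dvd hg1
    exact Nat.dvd_gcd (Nat.gcd_dvd_left _ _)
      ((Nat.gcd_dvd_right _ _).trans (Nat.gcd_dvd_left _ _))
  rw [← Finset.sum_subset hsub ?_]
  · apply Finset.sum_congr rfl
    intro f hfmem
    obtain ⟨hfdvd, -⟩ := Nat.mem_divisors.mp hfmem
    have hfk : (f:ℤ) ∣ k := by
      have h1 : f ∣ k.natAbs := hfdvd.trans ((Nat.gcd_dvd_right _ _).trans (Nat.gcd_dvd_right _ _))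
      exact (Int.natCast_dvd_natCast.mpr h1).trans (Int.natAbs_dvd.mpr dvd_rfl)
    rw [if_pos hfk]
  · intro f hfmem hfnot
    obtain ⟨hfdvd, -⟩ := Nat.mem_divisors.mp hfmem
    rw [if_neg]
    intro hfk
    apply hfnot
    rw [Nat.mem_divisors]
    constructor
    · refine Nat.dvd_gcd (hfdvd.trans (Nat.gcd_dvd_left _ _)) (Nat.dvd_gcd ?_ ?_)
      · exact hfdvd.trans (Nat.gcd_dvd_right _ _)
      · have := Int.natAbs_dvd_natAbs.mpr hfk
        simpa using this
    · exact Nat.gcd_ne_zero_left hd.ne'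
end

section
/- Let a be an odd positive integer, let m ≥ 0 be an integer, and let d and n be positive integers. Then Σ over pairs (e₁, e₂) with 1 ≤ e₁, e₂ ≤ d and e₁e₂ ≡ n (mod d) of ζ(−m−a, e₁/d)·ζ(−m, e₂/d) equals −(1/2)·d^{−a}·ζ(−a) if m = 0 and d divides n, and equals 0 otherwise. -/
open Finset

namespace Stmt13Aux

open HurwitzZeta

lemma hz_parity (k : ℕ) (x : UnitAddCircle) (hx : k = 0 → x ≠ 0) :
    hurwitzZeta (-x) (-(k:ℂ)) = (-1)^(k+1) * hurwitzZeta x (-(k:ℂ)) := by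
  unfold hurwitzZeta
  rw [hurwitzZetaEven_neg, hurwitzZetaOdd_neg]
  rcases Nat.even_or_odd' k with ⟨l, hk | hk⟩
  · rcases Nat.eq_zero_or_pos l with rfl | hl
    · have hk0 : k = 0 := by omega
      subst hk0
      rw [show (-(0:ℕ):ℂ) = 0 by simp, hurwitzZetaEven_apply_zero, if_neg (hx rfl)]
      ring
    · obtain ⟨l', rfl⟩ := Nat.exists_eq_succ_of_ne_zero hl.ne'
      have he : hurwitzZetaEven x (-(k:ℂ)) = 0 := by
        have := hurwitzZetaEven_neg_two_mul_nat_add_one x l'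
        have hc : (-2 : ℂ) * ((l' : ℕ) + 1) = -(k:ℂ) := by rw [hk]; push_cast; ring
        rwa [hc] at this
      have hsgn : ((-1:ℂ))^(k+1) = -1 := by
        rw [hk, pow_succ, pow_mul]; simp
      rw [he, hsgn]; ring
  · have ho : hurwitzZetaOdd x (-(k:ℂ)) = 0 := by
      have := hurwitzZetaOdd_neg_two_mul_nat_sub_one x l
      have hc : (-2 : ℂ) * l - 1 = -(k:ℂ) := by rw [hk]; push_cast; ring
      rwa [hc] at this
    have hsgn : ((-1:ℂ))^(k+1) = 1 := by
      rw [hk, show 2*l+1+1 = 2*(l+1) by ring, pow_mul]; simp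
    rw [ho, hsgn]; ring

def sig (d e : ℕ) : ℕ := if e = d then d else d - e

lemma sig_mem {d e : ℕ} (hd : 0 < d) (he : e ∈ Finset.Icc 1 d) : sig d e ∈ Finset.Icc 1 d := by
  simp only [Finset.mem_Icc] at *
  unfold sig; split <;> omega

lemma sig_sig {d e : ℕ} (he : e ∈ Finset.Icc 1 d) : sig d (sig d e) = e := by
  simp only [Finset.mem_Icc] at he
  unfold sig; split
  · split <;> omega
  · split <;> omega

lemma sig_zmod {d e : ℕ} (he : e ∈ Finset.Icc 1 d) : ((sig d e : ZMod d)) = -(e : ZMod d) := by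
  simp only [Finset.mem_Icc] at he
  unfold sig; split
  · subst ‹e = d›; simp
  · rw [Nat.cast_sub he.2]; simp

lemma sig_coe_circle {d e : ℕ} (hd : 0 < d) (he : e ∈ Finset.Icc 1 d) :
    ((((sig d e : ℕ) : ℝ) / d : ℝ) : UnitAddCircle) = -(((e : ℝ) / d : ℝ) : UnitAddCircle) := by
  simp only [Finset.mem_Icc] at he
  have hd0 : (d : ℝ) ≠ 0 := Nat.cast_ne_zero.mpr hd.ne'
  unfold sig; split
  · subst ‹e = d›
    rw [div_self hd0]
    have h1 : (((1:ℝ)) : UnitAddCircle) = 0 := AddCircle.coe_period 1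
    rw [h1, neg_zero]
  · have hle : e ≤ d := he.2
    have : ((d - e : ℕ) : ℝ) / d = 1 - (e : ℝ) / d := by
      rw [Nat.cast_sub hle]; field_simp
    rw [this,
      show ((((1:ℝ) - (e:ℝ)/d) : ℝ) : UnitAddCircle)
        = ((1:ℝ) : UnitAddCircle) - (((e:ℝ)/d : ℝ) : UnitAddCircle) from
        QuotientAddGroup.mk_sub _ _ _]
    rw [AddCircle.coe_period 1, zero_sub]

lemma coe_circle_ne_zero {d e : ℕ} (hd : 0 < d) (he : e ∈ Finset.Icc 1 d) (hed : e ≠ d) :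
    (((e : ℝ) / d : ℝ) : UnitAddCircle) ≠ 0 := by
  simp only [Finset.mem_Icc] at he
  intro hcon
  rw [AddCircle.coe_eq_zero_iff] at hcon
  obtain ⟨z, hz⟩ := hcon
  rw [zsmul_eq_mul, mul_one] at hz
  have hd0 : (0:ℝ) < d := Nat.cast_pos.mpr hd
  have h1 : (0:ℝ) < (e:ℝ)/d := by
    apply div_pos _ hd0
    exact_mod_cast Nat.lt_of_lt_of_le Nat.zero_lt_one he.1
  have h2 : (e:ℝ)/d < 1 := by
    rw [div_lt_one hd0]
    exact_mod_cast lt_of_le_of_ne he.2 hed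
  rw [← hz] at h1 h2
  have hz1 : (0:ℤ) < z := by exact_mod_cast h1
  have hz2 : z < 1 := by exact_mod_cast h2
  omega

lemma bern_mult (d : ℕ) (hd : 0 < d) (k : ℕ) :
    (d:ℚ)^k * ∑ j ∈ Finset.Icc 1 d, (Polynomial.bernoulli k).eval ((j:ℚ)/(d:ℚ)) =
      d * bernoulli' k := by
  induction k using Nat.strong_induction_on with
  | _ k IH =>
  have hd0 : (d : ℚ) ≠ 0 := Nat.cast_ne_zero.mpr hd.ne'
  have hk1 : ((k : ℚ) + 1) ≠ 0 := by positivity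
  set T : ℕ → ℚ := fun i => ∑ j ∈ Finset.Icc 1 d, (Polynomial.bernoulli i).eval ((j:ℚ)/(d:ℚ))
    with hT
  have hEvalSum : ∀ x : ℚ, ∑ i ∈ range (k+1),
      ((k+1).choose i : ℚ) * (Polynomial.bernoulli i).eval x = ((k:ℚ)+1) * x^k := by
    intro x
    have h := congrArg (Polynomial.eval x) (Polynomial.sum_bernoulli k)
    rw [Polynomial.eval_finset_sum] at h
    simp only [Polynomial.eval_smul, smul_eq_mul, Polynomial.eval_monomial] at h
    exact h
  have hE2 : ∑ i ∈ range (k+1), ((k+1).choose i:ℚ) * ((d:ℚ)^k * T i)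
      = ((k:ℚ)+1) * ∑ j ∈ Finset.Icc 1 d, (j:ℚ)^k := by
    have swap : ∑ i ∈ range (k+1), ((k+1).choose i:ℚ) * T i
        = ∑ j ∈ Finset.Icc 1 d, ((k:ℚ)+1) * ((j:ℚ)/d)^k := by
      simp_rw [hT, Finset.mul_sum]
      rw [Finset.sum_comm]
      exact Finset.sum_congr rfl fun j _ => hEvalSum _
    calc ∑ i ∈ range (k+1), ((k+1).choose i:ℚ) * ((d:ℚ)^k * T i)
        = (d:ℚ)^k * ∑ i ∈ range (k+1), ((k+1).choose i:ℚ) * T i := by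
          rw [Finset.mul_sum]; exact Finset.sum_congr rfl fun i _ => by ring
      _ = (d:ℚ)^k * ∑ j ∈ Finset.Icc 1 d, ((k:ℚ)+1) * ((j:ℚ)/d)^k := by rw [swap]
      _ = ((k:ℚ)+1) * ∑ j ∈ Finset.Icc 1 d, (j:ℚ)^k := by
          rw [Finset.mul_sum, Finset.mul_sum]
          refine Finset.sum_congr rfl fun j _ => ?_
          rw [div_pow]
          field_simp
  have hF : ((k:ℚ)+1) * ∑ j ∈ Finset.Icc 1 d, (j:ℚ)^k
      = ∑ i ∈ range (k+1), bernoulli' i * ((k+1).choose i:ℚ) * (d:ℚ)^(k+1-i) := by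
    rw [← Finset.Ico_add_one_right_eq_Icc, sum_Ico_pow, Finset.mul_sum]
    exact Finset.sum_congr rfl fun i _ => by rw [mul_div_assoc]; field_simp
  have hsplit := hE2.trans hF
  rw [Finset.sum_range_succ, Finset.sum_range_succ] at hsplit
  have hcong : ∀ i ∈ range k, ((k+1).choose i:ℚ) * ((d:ℚ)^k * T i)
      = bernoulli' i * ((k+1).choose i:ℚ) * (d:ℚ)^(k+1-i) := by
    intro i hi
    have hik : i < k := Finset.mem_range.mp hi
    have hIH := IH i hik
    have h1 : (d:ℚ)^k = (d:ℚ)^(k-i) * (d:ℚ)^i := by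
      rw [← pow_add, Nat.sub_add_cancel hik.le]
    have h2 : (d:ℚ)^(k+1-i) = (d:ℚ)^(k-i) * d := by
      rw [show k+1-i = (k-i)+1 by omega, pow_succ]
    calc ((k+1).choose i:ℚ) * ((d:ℚ)^k * T i)
        = ((k+1).choose i:ℚ) * (d:ℚ)^(k-i) * ((d:ℚ)^i * T i) := by rw [h1]; ring
      _ = ((k+1).choose i:ℚ) * (d:ℚ)^(k-i) * (d * bernoulli' i) := by rw [hIH]
      _ = bernoulli' i * ((k+1).choose i:ℚ) * (d:ℚ)^(k+1-i) := by rw [h2]; ring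
  rw [Finset.sum_congr rfl hcong] at hsplit
  have hlast := add_left_cancel hsplit
  rw [Nat.choose_succ_self_right, Nat.add_sub_cancel_left, pow_one] at hlast
  have : ((k:ℚ)+1) * ((d:ℚ)^k * T k) = ((k:ℚ)+1) * (d * bernoulli' k) := by
    push_cast at hlast ⊢
    linarith [hlast]
  exact mul_left_cancel₀ hk1 this

/-- Sum of Hurwitz zeta values at `j/d` for `j = 1, …, d`, at a negative odd integer. -/
lemma sum_hz (d a : ℕ) (hd : 0 < d) (hapos : 0 < a) (haodd : Odd a) :
    ∑ j ∈ Finset.Icc 1 d, hurwitzZeta ((((j:ℝ)/d) : ℝ) : UnitAddCircle) (-(a:ℂ))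
      = ((d:ℂ)^a)⁻¹ * riemannZeta (-(a:ℂ)) := by
  have hd0 : (d : ℝ) ≠ 0 := Nat.cast_ne_zero.mpr hd.ne'
  have hd0' : (d : ℂ) ≠ 0 := Nat.cast_ne_zero.mpr hd.ne'
  have ha1 : ((a : ℂ) + 1) ≠ 0 := Nat.cast_add_one_ne_zero a
  have step : ∀ j ∈ Finset.Icc 1 d,
      hurwitzZeta ((((j:ℝ)/d) : ℝ) : UnitAddCircle) (-(a:ℂ))
        = -1 / ((a:ℂ) + 1) * (((Polynomial.bernoulli (a+1)).eval ((j:ℚ)/(d:ℚ)) : ℚ) : ℂ) := by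
    intro j hj
    simp only [Finset.mem_Icc] at hj
    have hx : (j:ℝ)/d ∈ Set.Icc (0:ℝ) 1 := by
      constructor
      · positivity
      · rw [div_le_one (by positivity)]
        exact_mod_cast hj.2
    rw [hurwitzZeta_neg_nat hapos.ne' hx]
    congr 1
    have hcast : (((j:ℝ)/d : ℝ) : ℂ) = algebraMap ℚ ℂ ((j:ℚ)/(d:ℚ)) := by
      rw [eq_ratCast]
      push_cast
      ring
    rw [hcast, Polynomial.eval_map, Polynomial.eval₂_at_apply, eq_ratCast]
  rw [Finset.sum_congr rfl step, ← Finset.mul_sum]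
  have hbsum : ∑ j ∈ Finset.Icc 1 d, (((Polynomial.bernoulli (a+1)).eval ((j:ℚ)/(d:ℚ)) : ℚ) : ℂ)
      = (((d : ℚ) * bernoulli' (a+1) / (d:ℚ)^(a+1) : ℚ) : ℂ) := by
    rw [← Rat.cast_sum]
    congr 1
    have := bern_mult d hd (a+1)
    field_simp at this ⊢
    linarith [this]
  rw [hbsum]
  have hz : riemannZeta (-(a:ℂ)) = -((bernoulli' (a+1) : ℚ) : ℂ) / ((a:ℂ) + 1) := by
    rw [riemannZeta_neg_nat_eq_bernoulli]
    rw [bernoulli_eq_bernoulli'_of_ne_one (by omega)]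
    rw [Odd.neg_one_pow haodd]
    push_cast
    ring
  rw [hz]
  have hdq0 : ((d:ℚ):ℂ) ≠ 0 := by exact_mod_cast hd0'
  push_cast
  field_simp
  ring

/-- The involution cancellation lemma. -/
lemma cancel (a m d : ℕ) (haodd : Odd a) (hapos : 0 < a) (hd : 0 < d)
    (S' : Finset (ℕ×ℕ))
    (hsub : ∀ e ∈ S', e.1 ∈ Finset.Icc 1 d ∧ e.2 ∈ Finset.Icc 1 d ∧ (m = 0 → e.2 ≠ d))
    (hclosed : ∀ e ∈ S', (sig d e.1, sig d e.2) ∈ S') :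
    ∑ e ∈ S', hzeta (-(m:ℂ)-a) ((e.1:ℝ)/d) * hzeta (-(m:ℂ)) ((e.2:ℝ)/d) = 0 := by
  set f : ℕ×ℕ → ℂ := fun e => hzeta (-(m:ℂ)-a) ((e.1:ℝ)/d) * hzeta (-(m:ℂ)) ((e.2:ℝ)/d)
    with hf
  have hh : ∀ e ∈ S', f e + f (sig d e.1, sig d e.2) = 0 := by
    intro e he
    obtain ⟨h1, h2, h3⟩ := hsub e he
    have key1 : hzeta (-(m:ℂ)-a) ((sig d e.1 : ℝ)/d)
        = (-1:ℂ)^((m+a)+1) * hzeta (-(m:ℂ)-a) ((e.1:ℝ)/d) := by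
      have hs : -(m:ℂ)-a = -(((m+a : ℕ)):ℂ) := by push_cast; ring
      rw [hs]
      unfold hzeta
      rw [sig_coe_circle hd h1, hz_parity (m+a) _ (fun h0 => absurd h0 (by omega))]
    have key2 : hzeta (-(m:ℂ)) ((sig d e.2 : ℝ)/d)
        = (-1:ℂ)^(m+1) * hzeta (-(m:ℂ)) ((e.2:ℝ)/d) := by
      unfold hzeta
      rw [sig_coe_circle hd h2, hz_parity m _
        (fun h0 => coe_circle_ne_zero hd h2 (h3 h0))]
    have hsgn : ((-1:ℂ))^((m+a)+1) * ((-1:ℂ))^(m+1) = -1 := by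
      rw [← pow_add]
      apply Odd.neg_one_pow
      obtain ⟨c, hc⟩ := haodd
      exact ⟨m + c + 1, by omega⟩
    show f e + hzeta (-(m:ℂ)-a) ((sig d e.1 : ℝ)/d) * hzeta (-(m:ℂ)) ((sig d e.2 : ℝ)/d) = 0
    rw [key1, key2]
    calc f e + ((-1:ℂ)^((m+a)+1) * hzeta (-(m:ℂ)-a) ((e.1:ℝ)/d))
          * ((-1:ℂ)^(m+1) * hzeta (-(m:ℂ)) ((e.2:ℝ)/d))
        = f e + ((-1:ℂ)^((m+a)+1) * (-1:ℂ)^(m+1))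
          * (hzeta (-(m:ℂ)-a) ((e.1:ℝ)/d) * hzeta (-(m:ℂ)) ((e.2:ℝ)/d)) := by ring
      _ = 0 := by rw [hsgn, hf]; ring
  refine Finset.sum_involution (fun e _ => (sig d e.1, sig d e.2)) hh ?_ (fun e he => hclosed e he) ?_
  · intro e he hfe heq
    have h2 := hh e he
    rw [heq] at h2
    exact hfe (add_self_eq_zero.mp h2)
  · intro e he
    obtain ⟨h1, h2, _⟩ := hsub e he
    simp only [sig_sig h1, sig_sig h2]

end Stmt13Aux

open Stmt13Aux HurwitzZeta

theorem stmt13 (a : ℕ) (haodd : Odd a) (hapos : 0 < a) (m : ℕ) (d n : ℕ)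
    (hd : 0 < d) (hn : 0 < n) :
    ∑ e ∈ (Finset.Icc 1 d ×ˢ Finset.Icc 1 d).filter
        (fun e : ℕ × ℕ => e.1 * e.2 ≡ n [MOD d]),
      hzeta (-(m : ℂ) - a) ((e.1 : ℝ) / d) * hzeta (-(m : ℂ)) ((e.2 : ℝ) / d)
      = if m = 0 ∧ d ∣ n then
          -(1 / 2) * ((d : ℝ) ^ (-(a : ℝ)) : ℝ) * riemannZeta (-(a : ℂ))
        else 0 := by
  classical
  haveI : NeZero d := ⟨hd.ne'⟩
  set S := (Finset.Icc 1 d ×ˢ Finset.Icc 1 d).filter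
      (fun e : ℕ × ℕ => e.1 * e.2 ≡ n [MOD d]) with hS
  have hmemS : ∀ e : ℕ × ℕ, e ∈ S ↔
      e.1 ∈ Finset.Icc 1 d ∧ e.2 ∈ Finset.Icc 1 d ∧ e.1 * e.2 ≡ n [MOD d] := by
    intro e
    simp [hS, Finset.mem_filter, Finset.mem_product, and_assoc]
  have hcong_sig : ∀ e : ℕ × ℕ, e.1 ∈ Finset.Icc 1 d → e.2 ∈ Finset.Icc 1 d →
      e.1 * e.2 ≡ n [MOD d] → sig d e.1 * sig d e.2 ≡ n [MOD d] := by
    intro e h1 h2 hc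
    rw [← ZMod.natCast_eq_natCast_iff] at hc ⊢
    push_cast
    rw [sig_zmod h1, sig_zmod h2]
    push_cast at hc
    rw [← hc]; ring
  by_cases hc : m = 0 ∧ d ∣ n
  · obtain ⟨hm, hdn⟩ := hc
    subst hm
    rw [if_pos ⟨rfl, hdn⟩]
    rw [← Finset.sum_filter_add_sum_filter_not S (fun e => e.2 = d)]
    have hB : ∑ e ∈ S.filter (fun e => ¬ e.2 = d),
        hzeta (-(0:ℕ) - a) ((e.1:ℝ)/d) * hzeta (-(0:ℕ)) ((e.2:ℝ)/d) = 0 := by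
      apply cancel a 0 d haodd hapos hd
      · intro e he
        rw [Finset.mem_filter, hmemS] at he
        exact ⟨he.1.1, he.1.2.1, fun _ => he.2⟩
      · intro e he
        rw [Finset.mem_filter, hmemS] at he ⊢
        obtain ⟨⟨h1, h2, hcg⟩, hne⟩ := he
        refine ⟨⟨sig_mem hd h1, sig_mem hd h2, hcong_sig e h1 h2 hcg⟩, ?_⟩
        simp only [Finset.mem_Icc] at h2
        unfold sig
        rw [if_neg hne]
        omega
    rw [hB, add_zero]
    have hA : ∑ e ∈ S.filter (fun e => e.2 = d),
        hzeta (-(0:ℕ) - a) ((e.1:ℝ)/d) * hzeta (-(0:ℕ)) ((e.2:ℝ)/d)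
        = ∑ j ∈ Finset.Icc 1 d,
          hzeta (-(0:ℕ) - a) ((j:ℝ)/d) * hzeta (-(0:ℕ)) ((d:ℝ)/d) := by
      refine Finset.sum_nbij' (fun e => e.1) (fun j => (j, d)) ?_ ?_ ?_ ?_ ?_
      · intro e he
        rw [Finset.mem_filter, hmemS] at he
        exact he.1.1
      · intro j hj
        rw [Finset.mem_filter, hmemS]
        refine ⟨⟨hj, Finset.mem_Icc.mpr ⟨hd, le_refl d⟩, ?_⟩, rfl⟩
        rw [← ZMod.natCast_eq_natCast_iff]
        push_cast
        rw [ZMod.natCast_self]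
        rw [(ZMod.natCast_eq_zero_iff n d).mpr hdn]
        ring
      · intro e he
        rw [Finset.mem_filter] at he
        exact Prod.ext rfl he.2.symm
      · intro j _
        rfl
      · intro e he
        rw [Finset.mem_filter] at he
        rw [he.2]
    rw [hA]
    have hzz : hzeta (-(0:ℕ)) ((d:ℝ)/d) = -1/2 := by
      unfold hzeta
      rw [div_self (Nat.cast_ne_zero.mpr hd.ne' : (d:ℝ) ≠ 0)]
      rw [show (((1:ℝ)) : UnitAddCircle) = 0 from AddCircle.coe_period 1]
      rw [hurwitzZeta_zero]
      rw [show (-((0:ℕ):ℂ)) = 0 by simp]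
      exact riemannZeta_zero
    have hfirst : ∀ j : ℕ, hzeta (-(0:ℕ) - a) ((j:ℝ)/d)
        = hurwitzZeta ((((j:ℝ)/d) : ℝ) : UnitAddCircle) (-(a:ℂ)) := by
      intro j
      unfold hzeta
      norm_num
    simp_rw [hzz, hfirst]
    rw [← Finset.sum_mul, sum_hz d a hd hapos haodd]
    have hrpow : (((d : ℝ) ^ (-(a : ℝ)) : ℝ) : ℂ) = ((d:ℂ)^a)⁻¹ := by
      rw [Real.rpow_neg (Nat.cast_nonneg d), Real.rpow_natCast]
      push_cast
      ring
    rw [hrpow]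
    ring
  · rw [if_neg hc]
    apply cancel a m d haodd hapos hd
    · intro e he
      rw [hmemS] at he
      refine ⟨he.1, he.2.1, ?_⟩
      intro hm0 hed
      apply hc
      refine ⟨hm0, ?_⟩
      have hcg := he.2.2
      rw [hed, ← ZMod.natCast_eq_natCast_iff] at hcg
      push_cast at hcg
      rw [ZMod.natCast_self, mul_zero] at hcg
      exact (ZMod.natCast_eq_zero_iff n d).mp hcg.symm
    · intro e he
      rw [hmemS] at he ⊢
      exact ⟨sig_mem hd he.1, sig_mem hd he.2.1, hcong_sig e he.1 he.2.1 he.2.2⟩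
end
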